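/- arXiv:1711.05029 — 10 statements merged into one kernel-verified Lean document; each statement's English description precedes it below -/
import Mathlib

section
/- Assume the trace class condition ∑_{n≥0}(|a_n - 1/2| + |b_n|) < ∞. Let ζ ∈ ℂ with 0 < |ζ| ≤ 1 and ζ ∉ {1, -1}, and set z = (ζ + ζ⁻¹)/2. Then there exist a solution f = (f_n)_{n≥-1} of the Jacobi equation at spectral parameter z and a constant C > 0 such that |f_n ζ^{-n} - 1| ≤ C ρ_n for all n ≥ 0, where ρ_n = ∑_{m≥n}(|a_m - 1/2| + |b_m|). (Existence of the Jost solution with asymptotics f_n = ζⁿ(1 + O(ρ_n)).) -/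
open Filter Finset MeasureTheory

noncomputable section

/-- Extended coefficient sequence with `a₋₁ = 1/2`. -/
def aext (a : ℕ → ℝ) : ℤ → ℝ := fun k => if k < 0 then 1/2 else a k.toNat

/-- `u : ℤ → ℂ` (restricted to indices `n ≥ -1`) solves the Jacobi equation
`a_{n-1} u_{n-1} + b_n u_n + a_n u_{n+1} = z u_n` for all `n ≥ 0`, with `a_{-1} = 1/2`. -/
def IsJacobiSol (a b : ℕ → ℝ) (z : ℂ) (u : ℤ → ℂ) : Prop :=
  ∀ n : ℕ, (aext a ((n : ℤ) - 1) : ℂ) * u ((n : ℤ) - 1) + (b n : ℂ) * u (n : ℤ)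
      + (a n : ℂ) * u ((n : ℤ) + 1) = z * u (n : ℤ)

/-- The perturbation `V = H - H₀` applied to a sequence:
`(Vf)_m = (a_{m-1} - 1/2) f_{m-1} + b_m f_m + (a_m - 1/2) f_{m+1}` with `a_{-1} = 1/2`. -/
def jV (a b : ℕ → ℝ) (f : ℤ → ℂ) (m : ℕ) : ℂ :=
  ((aext a ((m : ℤ) - 1) - 1/2 : ℝ) : ℂ) * f ((m : ℤ) - 1) + (b m : ℂ) * f (m : ℤ)
    + ((a m - 1/2 : ℝ) : ℂ) * f ((m : ℤ) + 1)

private lemma summable_shift {G : Type*} [AddCommGroup G] [TopologicalSpace G]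
    [IsTopologicalAddGroup G] {h : ℕ → G} (hs : Summable h) (n : ℕ) :
    Summable fun i => h (n + i) :=
  ((summable_nat_add_iff n).2 hs).congr fun i => by rw [add_comm]

set_option maxHeartbeats 1000000 in
lemma jost_small (a b : ℕ → ℝ)
    (htr : Summable (fun n : ℕ => |a n - 1/2| + |b n|))
    (ζ : ℂ) (hζ0 : 0 < ‖ζ‖) (hζ1 : ‖ζ‖ ≤ 1) (hζp : ζ ≠ 1) (hζm : ζ ≠ -1)
    (z : ℂ) (hz : z = (ζ + ζ⁻¹) / 2)
    (ρ : ℕ → ℝ) (hρ : ∀ n, ρ n = ∑' m : ℕ, (|a (n + m) - 1/2| + |b (n + m)|))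
    (hsmall : 8 / (‖ζ‖ * ‖ζ⁻¹ - ζ‖) * ρ 0 ≤ 1/2) :
    ∃ f : ℤ → ℂ, IsJacobiSol a b z f ∧
      ∀ n : ℕ, ‖f (n : ℤ) * ζ ^ (-(n : ℤ)) - 1‖ ≤ 16 / (‖ζ‖ * ‖ζ⁻¹ - ζ‖) * ρ n := by
  have hζne : ζ ≠ 0 := by intro h; simp [h] at hζ0
  set β : ℂ := ζ⁻¹ - ζ with hβdef
  have hβ : β ≠ 0 := by
    intro h
    have h1 : ζ⁻¹ = ζ := sub_eq_zero.mp h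
    have h2 : ζ * ζ = 1 := by nth_rewrite 2 [← h1]; exact mul_inv_cancel₀ hζne
    rcases mul_self_eq_one_iff.1 h2 with h | h
    · exact hζp h
    · exact hζm h
  have hβn : 0 < ‖β‖ := norm_pos_iff.2 hβ
  set w : ℕ → ℝ := fun n => |a n - 1/2| + |b n| with hwdef
  have hw : Summable w := htr
  have hw0 : ∀ n, 0 ≤ w n := fun n => add_nonneg (abs_nonneg _) (abs_nonneg _)
  have hws : ∀ n, Summable fun m => w (n + m) := fun n => summable_shift hw n
  have hρnn : ∀ n, 0 ≤ ρ n := fun n => (hρ n) ▸ tsum_nonneg (fun m => hw0 _)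
  have hρstep : ∀ n, ρ n = w n + ρ (n + 1) := by
    intro n
    calc ρ n = ∑' m, w (n + m) := hρ n
      _ = w (n + 0) + ∑' m, w (n + (m + 1)) := Summable.tsum_eq_zero_add (hws n)
      _ = w n + ρ (n + 1) := by
          rw [hρ (n + 1), add_zero]
          congr 1
          exact tsum_congr fun m => by rw [show n + (m + 1) = n + 1 + m from by omega]
  have hρmono : ∀ n, ρ (n + 1) ≤ ρ n := fun n => by
    rw [hρstep n]; linarith [hw0 n]
  have hρ0le : ∀ n, ρ n ≤ ρ 0 := by
    intro n
    induction n with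
    | zero => exact le_rfl
    | succ k ih => exact (hρmono k).trans ih
  set κ : ℕ → ℂ := fun d => 2 * (1 - ζ ^ (2 * d)) / β with hκdef
  have hκbd : ∀ d, ‖κ d‖ ≤ 4 / ‖β‖ := by
    intro d
    have hx : ‖ζ ^ (2 * d)‖ ≤ 1 := by
      rw [norm_pow]; exact pow_le_one₀ (norm_nonneg _) hζ1
    have hnum : ‖(2 : ℂ) * (1 - ζ ^ (2 * d))‖ ≤ 4 := by
      rw [norm_mul]
      have h1 : ‖(1 : ℂ) - ζ ^ (2 * d)‖ ≤ 2 := by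
        calc ‖(1 : ℂ) - ζ ^ (2 * d)‖ ≤ ‖(1 : ℂ)‖ + ‖ζ ^ (2 * d)‖ := norm_sub_le _ _
          _ ≤ 2 := by rw [norm_one]; linarith
      have h2 : ‖(2 : ℂ)‖ = 2 := by norm_num
      rw [h2]; linarith
    calc ‖κ d‖ = ‖(2 : ℂ) * (1 - ζ ^ (2 * d))‖ / ‖β‖ := by rw [hκdef]; exact norm_div _ _
      _ ≤ 4 / ‖β‖ := by gcongr
  set K : ℝ := 8 / (‖ζ‖ * ‖β‖) with hKdef
  have hK : 0 < K := div_pos (by norm_num) (mul_pos hζ0 hβn)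
  have hζinv1 : 1 ≤ ‖ζ‖⁻¹ := by
    have h := mul_inv_cancel₀ (ne_of_gt hζ0)
    nlinarith [inv_nonneg.2 (norm_nonneg ζ)]
  -- the perturbation applied to a bounded sequence
  set W : BoundedContinuousFunction ℕ ℂ → ℕ → ℂ := fun g m =>
    if m = 0 then (b 0 : ℂ) * g 0 + ((a 0 : ℂ) - 1/2) * ζ * g 1
    else ((a (m - 1) : ℂ) - 1/2) * ζ⁻¹ * g (m - 1) + (b m : ℂ) * g m
        + ((a m : ℂ) - 1/2) * ζ * g (m + 1) with hWdef
  have habs : ∀ m : ℕ, ‖(a m : ℂ) - 1/2‖ ≤ w m := by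
    intro m
    have h1 : ((a m : ℂ) - 1/2) = ((a m - 1/2 : ℝ) : ℂ) := by push_cast; ring
    rw [h1, Complex.norm_real]
    exact le_add_of_nonneg_right (abs_nonneg _)
  have hbabs : ∀ m : ℕ, ‖(b m : ℂ)‖ ≤ w m := by
    intro m
    rw [Complex.norm_real]
    exact le_add_of_nonneg_left (abs_nonneg _)
  have hWbd : ∀ g m, ‖W g m‖ ≤ ‖ζ‖⁻¹ * (w (m - 1) + w m) * ‖g‖ := by
    intro g m
    have hgn : 0 ≤ ‖g‖ := norm_nonneg _
    rcases m with _ | k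
    · simp only [hWdef, if_pos rfl, Nat.zero_sub]
      have h1 : ‖(b 0 : ℂ) * g 0‖ ≤ w 0 * ‖g‖ := by
        rw [norm_mul]
        exact mul_le_mul (hbabs 0) (g.norm_coe_le_norm 0) (norm_nonneg _) (hw0 0)
      have h2 : ‖((a 0 : ℂ) - 1/2) * ζ * g 1‖ ≤ w 0 * ‖g‖ := by
        rw [norm_mul, norm_mul]
        have : ‖(a 0 : ℂ) - 1/2‖ * ‖ζ‖ ≤ w 0 := by
          nlinarith [habs 0, norm_nonneg ((a 0 : ℂ) - 1/2), hw0 0]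
        exact mul_le_mul this (g.norm_coe_le_norm 1) (norm_nonneg _) (hw0 0)
      calc ‖(b 0 : ℂ) * g 0 + ((a 0 : ℂ) - 1/2) * ζ * g 1‖
          ≤ ‖(b 0 : ℂ) * g 0‖ + ‖((a 0 : ℂ) - 1/2) * ζ * g 1‖ := norm_add_le _ _
        _ ≤ w 0 * ‖g‖ + w 0 * ‖g‖ := add_le_add h1 h2
        _ ≤ ‖ζ‖⁻¹ * (w 0 + w 0) * ‖g‖ := by
              nlinarith [mul_nonneg (mul_nonneg (sub_nonneg.2 hζinv1)
                (add_nonneg (hw0 0) (hw0 0))) hgn]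
    · simp only [hWdef, Nat.succ_sub_one, if_neg (Nat.succ_ne_zero k)]
      have h1 : ‖((a k : ℂ) - 1/2) * ζ⁻¹ * g k‖ ≤ ‖ζ‖⁻¹ * w k * ‖g‖ := by
        rw [norm_mul, norm_mul, norm_inv]
        have : ‖(a k : ℂ) - 1/2‖ * ‖ζ‖⁻¹ ≤ ‖ζ‖⁻¹ * w k := by
          nlinarith [habs k, inv_nonneg.2 (norm_nonneg ζ)]
        exact mul_le_mul this (g.norm_coe_le_norm k) (norm_nonneg _)
          (by positivity)
      have h2 : ‖(b (k+1) : ℂ) * g (k+1)‖ ≤ |b (k+1)| * ‖g‖ := by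
        rw [norm_mul, Complex.norm_real]
        exact mul_le_mul_of_nonneg_left (g.norm_coe_le_norm _) (abs_nonneg _)
      have h3 : ‖((a (k+1) : ℂ) - 1/2) * ζ * g (k+2)‖ ≤ |a (k+1) - 1/2| * ‖g‖ := by
        rw [norm_mul, norm_mul]
        have ha' : ‖(a (k+1) : ℂ) - 1/2‖ = |a (k+1) - 1/2| := by
          rw [show ((a (k+1) : ℂ) - 1/2) = ((a (k+1) - 1/2 : ℝ) : ℂ) from by push_cast; ring,
            Complex.norm_real, Real.norm_eq_abs]
        rw [ha']
        have key : ‖ζ‖ * ‖g (k+2)‖ ≤ ‖g‖ := by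
          nlinarith [g.norm_coe_le_norm (k+2), norm_nonneg (g (k+2)),
            mul_le_mul_of_nonneg_right hζ1 (norm_nonneg (g (k+2)))]
        rw [mul_assoc]
        exact mul_le_mul_of_nonneg_left key (abs_nonneg _)
      have hwk1 : |a (k+1) - 1/2| + |b (k+1)| = w (k+1) := rfl
      calc ‖((a k : ℂ) - 1/2) * ζ⁻¹ * g k + (b (k+1) : ℂ) * g (k+1)
            + ((a (k+1) : ℂ) - 1/2) * ζ * g (k+2)‖
          ≤ ‖((a k : ℂ) - 1/2) * ζ⁻¹ * g k + (b (k+1) : ℂ) * g (k+1)‖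
            + ‖((a (k+1) : ℂ) - 1/2) * ζ * g (k+2)‖ := norm_add_le _ _
        _ ≤ ‖((a k : ℂ) - 1/2) * ζ⁻¹ * g k‖ + ‖(b (k+1) : ℂ) * g (k+1)‖
            + ‖((a (k+1) : ℂ) - 1/2) * ζ * g (k+2)‖ := by
              linarith [norm_add_le (((a k : ℂ) - 1/2) * ζ⁻¹ * g k) ((b (k+1) : ℂ) * g (k+1))]
        _ ≤ ‖ζ‖⁻¹ * (w k + w (k+1)) * ‖g‖ := by
              have e : ‖ζ‖⁻¹ * (w k + w (k+1)) * ‖g‖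
                  = ‖ζ‖⁻¹ * w k * ‖g‖
                    + ‖ζ‖⁻¹ * (|a (k+1) - 1/2| + |b (k+1)|) * ‖g‖ := by
                rw [← hwk1]; ring
              rw [e]
              have h5 : |b (k+1)| * ‖g‖ + |a (k+1) - 1/2| * ‖g‖
                  ≤ ‖ζ‖⁻¹ * (|a (k+1) - 1/2| + |b (k+1)|) * ‖g‖ := by
                nlinarith [mul_nonneg (mul_nonneg (sub_nonneg.2 hζinv1)
                  (add_nonneg (abs_nonneg (a (k+1) - 1/2)) (abs_nonneg (b (k+1))))) hgn]
              linarith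
  have hwm1 : Summable fun m : ℕ => w (m - 1) := by
    apply (summable_nat_add_iff 1).1
    simpa using hw
  have hWsum : ∀ g, Summable (fun m => ‖W g m‖) := by
    intro g
    apply Summable.of_nonneg_of_le (fun m => norm_nonneg _) (hWbd g)
    have : Summable fun m : ℕ => w (m - 1) + w m := hwm1.add hw
    simpa [mul_assoc] using (this.mul_left (‖ζ‖⁻¹)).mul_right ‖g‖
  have hWs : ∀ g, Summable (W g) := fun g => (hWsum g).of_norm
  have hWtailbd : ∀ g n i, ‖W g (n + 1 + i)‖ ≤ ‖ζ‖⁻¹ * (w (n + i) + w (n + 1 + i)) * ‖g‖ := by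
    intro g n i
    have := hWbd g (n + 1 + i)
    rwa [show n + 1 + i - 1 = n + i from by omega] at this
  have hWtail : ∀ g n, ∑' i : ℕ, ‖W g (n + 1 + i)‖ ≤ ‖ζ‖⁻¹ * (2 * ρ n) * ‖g‖ := by
    intro g n
    have hs1 : Summable fun i => ‖W g (n + 1 + i)‖ := summable_shift (hWsum g) (n + 1)
    have hs2 : Summable fun i : ℕ => ‖ζ‖⁻¹ * (w (n + i) + w (n + 1 + i)) * ‖g‖ := by
      have : Summable fun i : ℕ => w (n + i) + w (n + 1 + i) := (hws n).add (hws (n + 1))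
      simpa [mul_assoc] using (this.mul_left (‖ζ‖⁻¹)).mul_right ‖g‖
    calc ∑' i : ℕ, ‖W g (n + 1 + i)‖
        ≤ ∑' i : ℕ, ‖ζ‖⁻¹ * (w (n + i) + w (n + 1 + i)) * ‖g‖ :=
          Summable.tsum_le_tsum (hWtailbd g n) hs1 hs2
      _ = ‖ζ‖⁻¹ * (ρ n + ρ (n + 1)) * ‖g‖ := by
          rw [tsum_mul_right, tsum_mul_left, Summable.tsum_add (hws n) (hws (n + 1)),
            ← hρ n, ← hρ (n + 1)]
      _ ≤ ‖ζ‖⁻¹ * (2 * ρ n) * ‖g‖ := by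
          have h1 := hρmono n
          gcongr
          linarith
  have hTs : ∀ (g : BoundedContinuousFunction ℕ ℂ) (c : ℕ → ℂ) (B : ℝ),
      (∀ i, ‖c i‖ ≤ B) → ∀ n, Summable (fun i => c i * W g (n + i)) := by
    intro g c B hc n
    apply Summable.of_norm
    refine Summable.of_nonneg_of_le (f := fun i => B * ‖W g (n + i)‖)
      (fun _ => norm_nonneg _) (fun i => ?_) ((summable_shift (hWsum g) n).mul_left B)
    rw [norm_mul]
    exact mul_le_mul_of_nonneg_right (hc i) (norm_nonneg _)
  set T : BoundedContinuousFunction ℕ ℂ → ℕ → ℂ :=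
    fun g n => ∑' i : ℕ, κ (i + 1) * W g (n + i) with hTdef
  have hκb1 : ∀ i : ℕ, ‖κ (i + 1)‖ ≤ 4 / ‖β‖ := fun i => hκbd (i + 1)
  have hTbd : ∀ g n, ‖T g (n + 1)‖ ≤ K * ρ n * ‖g‖ := by
    intro g n
    have hsn : Summable fun i => ‖κ (i + 1) * W g (n + 1 + i)‖ := by
      refine Summable.of_nonneg_of_le (f := fun i => (4 / ‖β‖) * ‖W g (n + 1 + i)‖)
        (fun _ => norm_nonneg _) (fun i => ?_)
        ((summable_shift (hWsum g) (n + 1)).mul_left _)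
      rw [norm_mul]
      exact mul_le_mul_of_nonneg_right (hκb1 i) (norm_nonneg _)
    calc ‖T g (n + 1)‖ ≤ ∑' i : ℕ, ‖κ (i + 1) * W g (n + 1 + i)‖ :=
          norm_tsum_le_tsum_norm hsn
      _ ≤ ∑' i : ℕ, (4 / ‖β‖) * ‖W g (n + 1 + i)‖ := by
          apply Summable.tsum_le_tsum _ hsn ((summable_shift (hWsum g) (n + 1)).mul_left _)
          intro i
          rw [norm_mul]
          exact mul_le_mul_of_nonneg_right (hκb1 i) (norm_nonneg _)
      _ = (4 / ‖β‖) * ∑' i : ℕ, ‖W g (n + 1 + i)‖ := tsum_mul_left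
      _ ≤ (4 / ‖β‖) * (‖ζ‖⁻¹ * (2 * ρ n) * ‖g‖) := by
          apply mul_le_mul_of_nonneg_left (hWtail g n) (by positivity)
      _ = K * ρ n * ‖g‖ := by
          rw [hKdef]
          field_simp
          ring
  -- the Volterra map
  set Φ : BoundedContinuousFunction ℕ ℂ → BoundedContinuousFunction ℕ ℂ := fun g =>
    BoundedContinuousFunction.mkOfBound
      ⟨fun n => 1 - T g (n + 1), continuous_of_discreteTopology⟩
      (2 * (K * ρ 0 * ‖g‖))
      (by
        intro x y
        have hx : ‖T g (x + 1)‖ ≤ K * ρ 0 * ‖g‖ := by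
          refine (hTbd g x).trans ?_
          have := hρ0le x
          have := hρnn x
          gcongr
        have hy : ‖T g (y + 1)‖ ≤ K * ρ 0 * ‖g‖ := by
          refine (hTbd g y).trans ?_
          have := hρ0le y
          have := hρnn y
          gcongr
        calc dist (1 - T g (x + 1)) (1 - T g (y + 1))
            = ‖T g (y + 1) - T g (x + 1)‖ := by
              rw [dist_eq_norm]
              congr 1
              ring
          _ ≤ ‖T g (y + 1)‖ + ‖T g (x + 1)‖ := norm_sub_le _ _
          _ ≤ 2 * (K * ρ 0 * ‖g‖) := by linarith) with hΦdef
  have hΦapp : ∀ g n, Φ g n = 1 - T g (n + 1) := fun g n => rfl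
  have hWlin : ∀ (g g' : BoundedContinuousFunction ℕ ℂ) m,
      W g m - W g' m = W (g - g') m := by
    intro g g' m
    rcases m with _ | k
    · simp only [hWdef, if_pos rfl, BoundedContinuousFunction.coe_sub, Pi.sub_apply]
      ring
    · simp only [hWdef, if_neg (Nat.succ_ne_zero k), BoundedContinuousFunction.coe_sub,
        Pi.sub_apply]
      ring
  have hTlin : ∀ (g g' : BoundedContinuousFunction ℕ ℂ) n,
      T g n - T g' n = T (g - g') n := by
    intro g g' n
    rw [hTdef]
    simp only
    rw [← Summable.tsum_sub (hTs g _ _ hκb1 n) (hTs g' _ _ hκb1 n)]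
    exact tsum_congr fun i => by rw [← mul_sub, hWlin]
  have hhalf : (8 : ℝ) / (‖ζ‖ * ‖β‖) * ρ 0 ≤ 1 / 2 := hsmall
  have hLip : LipschitzWith (1/2 : NNReal) Φ := by
    apply LipschitzWith.of_dist_le_mul
    intro g g'
    have hc : (0 : ℝ) ≤ (1/2 : NNReal) * dist g g' := by positivity
    rw [BoundedContinuousFunction.dist_le hc]
    intro x
    have he : Φ g x - Φ g' x = T (g' - g) (x + 1) := by
      rw [hΦapp, hΦapp, ← hTlin g' g (x + 1)]
      ring
    rw [dist_eq_norm, he]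
    calc ‖T (g' - g) (x + 1)‖ ≤ K * ρ x * ‖g' - g‖ := hTbd _ x
      _ ≤ (1/2) * ‖g' - g‖ := by
          have h1 : K * ρ x ≤ K * ρ 0 := mul_le_mul_of_nonneg_left (hρ0le x) hK.le
          have h2 : K * ρ 0 ≤ 1/2 := hsmall
          have := norm_nonneg (g' - g)
          nlinarith
      _ = (1/2 : NNReal) * dist g g' := by
          rw [dist_eq_norm, norm_sub_rev]
          norm_num
  have hcontr : ContractingWith (1/2 : NNReal) Φ :=
    ⟨by exact_mod_cast (by norm_num : (1/2 : ℝ) < 1), hLip⟩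
  set g : BoundedContinuousFunction ℕ ℂ := ContractingWith.fixedPoint Φ hcontr with hgdef
  have hgfix : Φ g = g := hcontr.fixedPoint_isFixedPt
  have hgeq : ∀ n, g n = 1 - T g (n + 1) := by
    intro n
    conv_lhs => rw [← hgfix]
    exact hΦapp g n
  have hgnn : 0 ≤ ‖g‖ := norm_nonneg _
  have hg2 : ‖g‖ ≤ 2 := by
    have h1 : ∀ n, ‖g n‖ ≤ 1 + K * ρ 0 * ‖g‖ := by
      intro n
      rw [hgeq n]
      calc ‖1 - T g (n + 1)‖ ≤ ‖(1 : ℂ)‖ + ‖T g (n + 1)‖ := norm_sub_le _ _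
        _ ≤ 1 + K * ρ 0 * ‖g‖ := by
            have h2 := hTbd g n
            have h3 : K * ρ n * ‖g‖ ≤ K * ρ 0 * ‖g‖ := by
              have := hρ0le n
              gcongr
            rw [norm_one]
            linarith
    have hpos : (0:ℝ) ≤ 1 + K * ρ 0 * ‖g‖ := by
      have := mul_nonneg (mul_nonneg hK.le (hρnn 0)) hgnn
      linarith
    have h2 : ‖g‖ ≤ 1 + K * ρ 0 * ‖g‖ :=
      (BoundedContinuousFunction.norm_le hpos).2 h1
    nlinarith [mul_le_mul_of_nonneg_right hsmall hgnn]
  have hgbd : ∀ n, ‖g n - 1‖ ≤ 16 / (‖ζ‖ * ‖β‖) * ρ n := by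
    intro n
    have h1 : g n - 1 = -(T g (n + 1)) := by rw [hgeq n]; ring
    rw [h1, norm_neg]
    calc ‖T g (n + 1)‖ ≤ K * ρ n * ‖g‖ := hTbd g n
      _ ≤ K * ρ n * 2 := by
          have := hρnn n
          gcongr
      _ = 16 / (‖ζ‖ * ‖β‖) * ρ n := by rw [hKdef]; ring

  have hζζ : ζ * ζ⁻¹ = 1 := mul_inv_cancel₀ hζne
  have hβ' : ζ⁻¹ - ζ ≠ 0 := by rw [← hβdef]; exact hβ
  have hκmul : ∀ d : ℕ, β * κ d = 2 * (1 - ζ ^ (2*d)) := by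
    intro d
    rw [hκdef]
    simp only
    rw [mul_comm, div_mul_cancel₀ _ hβ]
  have hκ1 : κ 1 = 2 * ζ := by
    refine mul_left_cancel₀ hβ ?_
    rw [hκmul 1, hβdef]
    linear_combination (-2 : ℂ) * hζζ
  have hκ2 : κ 2 = 2 * ζ + 2 * ζ^3 := by
    refine mul_left_cancel₀ hβ ?_
    rw [hκmul 2, hβdef]
    linear_combination (-2 - 2*ζ^2 : ℂ) * hζζ
  have hA : (1/2 : ℂ) * ζ⁻¹ * κ 1 = 1 := by
    rw [hκ1]
    linear_combination hζζ
  have hB : (1/2 : ℂ) * ζ⁻¹ * κ 2 = z * κ 1 := by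
    rw [hκ1, hκ2, hz]
    linear_combination (ζ^2 : ℂ) * hζζ
  have hC : ∀ d : ℕ, (1/2:ℂ) * ζ⁻¹ * κ (d+2) + (1/2) * ζ * κ d = z * κ (d+1) := by
    intro d
    refine mul_left_cancel₀ (mul_ne_zero hζne hβ) ?_
    have l : ζ * β * ((1/2:ℂ) * ζ⁻¹ * κ (d+2) + (1/2) * ζ * κ d)
        = (1 - ζ^(2*(d+2))) + ζ^2 * (1 - ζ^(2*d)) := by
      calc ζ * β * ((1/2:ℂ) * ζ⁻¹ * κ (d+2) + (1/2) * ζ * κ d)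
          = (1/2:ℂ) * (ζ * ζ⁻¹) * (β * κ (d+2)) + (1/2) * ζ^2 * (β * κ d) := by ring
        _ = (1 - ζ^(2*(d+2))) + ζ^2 * (1 - ζ^(2*d)) := by
            rw [hζζ, hκmul, hκmul]; ring
    have r : ζ * β * (z * κ (d+1)) = (1 + ζ^2) * (1 - ζ^(2*(d+1))) := by
      calc ζ * β * (z * κ (d+1)) = z * ζ * (β * κ (d+1)) := by ring
        _ = ((ζ + ζ⁻¹)/2) * ζ * (2 * (1 - ζ^(2*(d+1)))) := by rw [hz, hκmul]
        _ = (ζ^2 + ζ * ζ⁻¹) * (1 - ζ^(2*(d+1))) := by ring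
        _ = (1 + ζ^2) * (1 - ζ^(2*(d+1))) := by rw [hζζ]; ring
    rw [l, r]
    ring
  have hkey : ∀ n : ℕ,
      (1/2 : ℂ) * ζ⁻¹ * (1 - T g n) + (1/2) * ζ * (1 - T g (n+2))
        - z * (1 - T g (n+1)) + W g n = 0 := by
    intro n
    have hzc : (1/2:ℂ) * ζ⁻¹ + (1/2) * ζ - z = 0 := by rw [hz]; ring
    have s1 : Summable fun i => κ (i+1) * W g (n+i) := hTs g _ _ hκb1 n
    have s2 : Summable fun i => κ (i+2) * W g (n+1+i) :=
      hTs g _ _ (fun i => hκbd (i+2)) (n+1)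
    have s3 : Summable fun i => κ (i+1) * W g (n+1+i) := hTs g _ _ hκb1 (n+1)
    have e1 : T g n = κ 1 * W g n + κ 2 * W g (n+1) + ∑' i : ℕ, κ (i+3) * W g (n+2+i) := by
      rw [hTdef]
      simp only
      rw [Summable.tsum_eq_zero_add s1]
      have h1 : ∀ i : ℕ, κ (i+1+1) * W g (n+(i+1)) = κ (i+2) * W g (n+1+i) := fun i => by
        rw [show n+(i+1) = n+1+i from by omega]
      rw [tsum_congr h1, Summable.tsum_eq_zero_add s2]
      have h2 : ∀ i : ℕ, κ (i+1+2) * W g (n+1+(i+1)) = κ (i+3) * W g (n+2+i) := fun i => by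
        rw [show i+1+2 = i+3 from by omega, show n+1+(i+1) = n+2+i from by omega]
      rw [tsum_congr h2]
      simp only [zero_add, add_zero, Nat.zero_add, Nat.add_zero, ← add_assoc]
    have e2 : T g (n+1) = κ 1 * W g (n+1) + ∑' i : ℕ, κ (i+2) * W g (n+2+i) := by
      rw [hTdef]
      simp only
      rw [Summable.tsum_eq_zero_add s3]
      have h1 : ∀ i : ℕ, κ (i+1+1) * W g (n+1+(i+1)) = κ (i+2) * W g (n+2+i) := fun i => by
        rw [show n+1+(i+1) = n+2+i from by omega]
      rw [tsum_congr h1]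
    have e3 : T g (n+2) = ∑' i : ℕ, κ (i+1) * W g (n+2+i) := by rw [hTdef]
    have sa : Summable fun i => κ (i+3) * W g (n+2+i) :=
      hTs g _ _ (fun i => hκbd (i+3)) (n+2)
    have sb : Summable fun i => κ (i+1) * W g (n+2+i) := hTs g _ _ hκb1 (n+2)
    have sc : Summable fun i => κ (i+2) * W g (n+2+i) :=
      hTs g _ _ (fun i => hκbd (i+2)) (n+2)
    have hzero : (1/2:ℂ)*ζ⁻¹ * (∑' i:ℕ, κ (i+3) * W g (n+2+i))
        + (1/2)*ζ * (∑' i:ℕ, κ (i+1) * W g (n+2+i))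
        - z * (∑' i:ℕ, κ (i+2) * W g (n+2+i)) = 0 := by
      rw [← tsum_mul_left, ← tsum_mul_left, ← tsum_mul_left,
        ← Summable.tsum_add (sa.mul_left _) (sb.mul_left _),
        ← Summable.tsum_sub ((sa.mul_left ((1/2:ℂ)*ζ⁻¹)).add (sb.mul_left ((1/2:ℂ)*ζ))) (sc.mul_left z)]
      have hzz : ∀ i : ℕ, (1/2:ℂ)*ζ⁻¹ * (κ (i+3) * W g (n+2+i))
          + (1/2)*ζ * (κ (i+1) * W g (n+2+i)) - z * (κ (i+2) * W g (n+2+i)) = 0 := by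
        intro i
        linear_combination (W g (n+2+i)) * hC (i+1)
      rw [tsum_congr hzz, tsum_zero]
    rw [e1, e2, e3]
    linear_combination hzc - hzero - W g n * hA - W g (n+1) * hB
  have haextnat : ∀ m : ℕ, aext a (m : ℤ) = a m := by
    intro m
    simp [aext]
  set f : ℤ → ℂ := fun n => if n < 0 then ζ⁻¹ * (1 - T g 0) else ζ ^ n.toNat * g n.toNat
    with hfdef
  have fnat : ∀ m : ℕ, f (m : ℤ) = ζ ^ m * g m := by
    intro m
    simp [hfdef]
  refine ⟨f, ?_, ?_⟩
  · intro n
    rcases n with _ | k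
    · have hfm1 : f (((0:ℕ):ℤ) - 1) = ζ⁻¹ * (1 - T g 0) := by norm_num [hfdef]
      have haext0 : aext a (((0:ℕ):ℤ) - 1) = 1/2 := by norm_num [aext]
      have hf0 : f ((0:ℕ):ℤ) = g 0 := by rw [fnat 0]; simp
      have hf1 : f (((0:ℕ):ℤ) + 1) = ζ * g 1 := by
        rw [show ((0:ℕ):ℤ) + 1 = ((1:ℕ):ℤ) from by norm_num, fnat 1]
        ring
      rw [hfm1, haext0, hf0, hf1]
      have h := hkey 0
      have hW0 : W g 0 = (b 0 : ℂ) * g 0 + ((a 0 : ℂ) - 1/2) * ζ * g 1 := by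
        simp [hWdef]
      have hg0 : (1:ℂ) - T g (0+1) = g 0 := (hgeq 0).symm
      have hg1 : (1:ℂ) - T g (0+2) = g 1 := by
        rw [show (0:ℕ)+2 = 1+1 from rfl]
        exact (hgeq 1).symm
      rw [hW0, hg0, hg1] at h
      push_cast
      linear_combination h
    · have e1 : ((k+1:ℕ):ℤ) - 1 = ((k:ℕ):ℤ) := by push_cast; ring
      have e2 : ((k+1:ℕ):ℤ) + 1 = ((k+2:ℕ):ℤ) := by push_cast; ring
      rw [e1, e2, fnat k, fnat (k+1), fnat (k+2), haextnat k]
      have h := hkey (k+1)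
      have hW1 : W g (k+1) = ((a k : ℂ) - 1/2) * ζ⁻¹ * g k + (b (k+1) : ℂ) * g (k+1)
          + ((a (k+1) : ℂ) - 1/2) * ζ * g (k+2) := by
        simp only [hWdef, if_neg (Nat.succ_ne_zero k), Nat.succ_sub_one]
      have hg0 : (1:ℂ) - T g (k+1) = g k := (hgeq k).symm
      have hg1 : (1:ℂ) - T g (k+1+2) = g (k+2) := by
        rw [show k+1+2 = (k+2)+1 from by omega]
        exact (hgeq (k+2)).symm
      have hg2 : (1:ℂ) - T g (k+1+1) = g (k+1) := by
        rw [show k+1+1 = (k+1)+1 from rfl]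
        exact (hgeq (k+1)).symm
      rw [hW1, hg0, hg1, hg2] at h
      push_cast
      linear_combination (ζ ^ (k+1)) * h - (a k : ℂ) * g k * ζ^k * hζζ
  · intro n
    have hpow : (ζ ^ n) * ζ ^ (-(n:ℤ)) = 1 := by
      rw [← zpow_natCast ζ n, ← zpow_add₀ hζne]
      simp
    have hfg : f (n:ℤ) * ζ ^ (-(n:ℤ)) = g n := by
      rw [fnat n]
      calc (ζ^n * g n) * ζ ^ (-(n:ℤ)) = g n * ((ζ^n) * ζ ^ (-(n:ℤ))) := by ring
        _ = g n := by rw [hpow, mul_one]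
    rw [hfg]
    exact hgbd n


lemma aext_natCast (c : ℕ → ℝ) (m : ℕ) : aext c (m : ℤ) = c m := by
  simp [aext]

set_option maxHeartbeats 1000000 in
/-- existence of the Jost solution `f_n = ζⁿ (1 + O(ρ_n))` under the
trace class condition. -/
theorem jost_solution_exists
    (a b : ℕ → ℝ) (ha : ∀ n, 0 < a n)
    (htr : Summable (fun n : ℕ => |a n - 1/2| + |b n|))
    (ζ : ℂ) (hζ0 : 0 < ‖ζ‖) (hζ1 : ‖ζ‖ ≤ 1) (hζp : ζ ≠ 1) (hζm : ζ ≠ -1)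
    (z : ℂ) (hz : z = (ζ + ζ⁻¹) / 2)
    (ρ : ℕ → ℝ) (hρ : ∀ n, ρ n = ∑' m : ℕ, (|a (n + m) - 1/2| + |b (n + m)|)) :
    ∃ (f : ℤ → ℂ) (C : ℝ), 0 < C ∧ IsJacobiSol a b z f ∧
      ∀ n : ℕ, ‖f (n : ℤ) * ζ ^ (-(n : ℤ)) - 1‖ ≤ C * ρ n := by
  have hζne : ζ ≠ 0 := by intro h; simp [h] at hζ0
  have hβ : (ζ⁻¹ - ζ) ≠ 0 := by
    intro h
    have h1 : ζ⁻¹ = ζ := sub_eq_zero.mp h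
    have h2 : ζ * ζ = 1 := by nth_rewrite 2 [← h1]; exact mul_inv_cancel₀ hζne
    rcases mul_self_eq_one_iff.1 h2 with h | h
    · exact hζp h
    · exact hζm h
  have hβn : 0 < ‖ζ⁻¹ - ζ‖ := norm_pos_iff.2 hβ
  set K : ℝ := 8 / (‖ζ‖ * ‖ζ⁻¹ - ζ‖) with hKdef
  have hK : 0 < K := div_pos (by norm_num) (mul_pos hζ0 hβn)
  set w : ℕ → ℝ := fun n => |a n - 1/2| + |b n| with hwdef
  have hw : Summable w := htr
  have hw0 : ∀ n, 0 ≤ w n := fun n => add_nonneg (abs_nonneg _) (abs_nonneg _)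
  have hρnn : ∀ n, 0 ≤ ρ n := fun n => (hρ n) ▸ tsum_nonneg (fun m => hw0 _)
  have hρtend : Tendsto ρ atTop (nhds 0) := by
    have h := tendsto_sum_nat_add w
    refine h.congr fun i => ?_
    rw [hρ i]
    exact tsum_congr fun m => by rw [add_comm]
  have hex : ∃ N, K * ρ N ≤ 1/2 := by
    have hpos : (0:ℝ) < (1/2) / K := by positivity
    obtain ⟨N, hN⟩ := (hρtend.eventually (gt_mem_nhds hpos)).exists
    have h1 : K * ρ N ≤ K * ((1/2)/K) := mul_le_mul_of_nonneg_left hN.le hK.le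
    have h2 : K * ((1/2)/K) = 1/2 := by field_simp
    exact ⟨N, by rw [h2] at h1; exact h1⟩
  set N := Nat.find hex with hNdef
  have hNspec : K * ρ N ≤ 1/2 := Nat.find_spec hex
  have hNmin : ∀ n < N, 1/2 < K * ρ n := fun n hn => lt_of_not_ge (Nat.find_min hex hn)
  obtain ⟨f', hsol', hbd'⟩ := jost_small (fun m => a (N + m)) (fun m => b (N + m))
    (summable_shift htr N) ζ hζ0 hζ1 hζp hζm z hz (fun m => ρ (N + m))
    (by
      intro n
      show ρ (N + n) = ∑' m : ℕ, (|a (N + (n + m)) - 1/2| + |b (N + (n + m))|)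
      rw [hρ (N + n)]
      exact tsum_congr fun m => by rw [show N + n + m = N + (n + m) from by omega])
    (by
      show 8 / (‖ζ‖ * ‖ζ⁻¹ - ζ‖) * ρ (N + 0) ≤ 1/2
      rw [show N + 0 = N from rfl, ← hKdef]
      exact hNspec)
  set r : ℕ → ℂ × ℂ := fun j => Nat.rec (ζ^(N:ℤ) * f' 1, ζ^(N:ℤ) * f' 0)
    (fun j p => (p.2, ((z - (b (N - j) : ℂ)) * p.2 - (a (N - j) : ℂ) * p.1)
      / ((aext a (((N - j : ℕ) : ℤ) - 1) : ℝ) : ℂ))) j with hrdef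
  have hr0 : r 0 = (ζ^(N:ℤ) * f' 1, ζ^(N:ℤ) * f' 0) := rfl
  have hrs : ∀ j, r (j+1) = ((r j).2,
      ((z - (b (N - j) : ℂ)) * (r j).2 - (a (N - j) : ℂ) * (r j).1)
        / ((aext a (((N - j : ℕ) : ℤ) - 1) : ℝ) : ℂ)) := fun j => rfl
  set F : ℤ → ℂ := fun n => if (N:ℤ) ≤ n then ζ^(N:ℤ) * f' (n - N) else (r (N - n).toNat).2
    with hFdef
  have hFhi : ∀ n : ℤ, (N:ℤ) ≤ n → F n = ζ^(N:ℤ) * f' (n - N) := fun n h => by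
    simp only [hFdef, if_pos h]
  have hF2 : ∀ j : ℕ, F ((N:ℤ) - j) = (r j).2 := by
    intro j
    rcases j with _ | i
    · rw [show (N:ℤ) - ((0:ℕ):ℤ) = (N:ℤ) from by push_cast; ring,
        hFhi (N:ℤ) le_rfl, sub_self]
      rfl
    · have hlt : ¬ ((N:ℤ) ≤ (N:ℤ) - ((i+1:ℕ):ℤ)) := by push_cast; omega
      simp only [hFdef, if_neg hlt]
      rw [show (N:ℤ) - ((N:ℤ) - ((i+1:ℕ):ℤ)) = ((i+1:ℕ):ℤ) from by ring,
        Int.toNat_natCast]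
  have hF1 : ∀ j : ℕ, F ((N:ℤ) - j + 1) = (r j).1 := by
    intro j
    rcases j with _ | i
    · rw [show (N:ℤ) - ((0:ℕ):ℤ) + 1 = (N:ℤ) + 1 from by push_cast; ring,
        hFhi _ (by omega), show (N:ℤ) + 1 - N = 1 from by ring]
      rfl
    · rw [show (N:ℤ) - ((i+1:ℕ):ℤ) + 1 = (N:ℤ) - ((i:ℕ):ℤ) from by push_cast; ring,
        hF2 i, hrs i]
  have hsol : IsJacobiSol a b z F := by
    intro n
    rcases le_or_gt n N with hn | hn
    · -- small indices: by construction of the backward recursion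
      have hcast : ((N - n : ℕ) : ℤ) = (N:ℤ) - (n:ℤ) := by
        rw [Nat.cast_sub hn]
      have hFn : F (n:ℤ) = (r (N - n)).2 := by
        rw [show (n:ℤ) = (N:ℤ) - ((N - n : ℕ):ℤ) from by omega]
        exact hF2 (N - n)
      have hFn1 : F ((n:ℤ) + 1) = (r (N - n)).1 := by
        rw [show (n:ℤ) + 1 = (N:ℤ) - ((N - n : ℕ):ℤ) + 1 from by omega]
        exact hF1 (N - n)
      have hFm1 : F ((n:ℤ) - 1) = (r (N - n + 1)).2 := by
        rw [show (n:ℤ) - 1 = (N:ℤ) - ((N - n + 1 : ℕ):ℤ) from by omega]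
        exact hF2 (N - n + 1)
      have hNn : N - (N - n) = n := by omega
      have hr2 : (r (N - n + 1)).2 = ((z - (b n : ℂ)) * F (n:ℤ) - (a n : ℂ) * F ((n:ℤ) + 1))
          / ((aext a ((n:ℤ) - 1) : ℝ) : ℂ) := by
        rw [hrs (N - n)]
        simp only [hNn]
        rw [← hFn, ← hFn1]
      have hane : ((aext a ((n:ℤ) - 1) : ℝ) : ℂ) ≠ 0 := by
        have hpos : 0 < aext a ((n:ℤ) - 1) := by
          by_cases hc : (n:ℤ) - 1 < 0
          · simp only [aext, if_pos hc]; norm_num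
          · simp only [aext, if_neg hc]; exact ha _
        exact_mod_cast ne_of_gt hpos
      rw [hFm1, hr2]
      field_simp
      ring
    · -- large indices: from the shifted solution
      have hn' : N ≤ n := hn.le
      set k := n - N with hkdef
      have hk1 : 1 ≤ k := by omega
      have hnk : n = N + k := by omega
      have h := hsol' k
      beta_reduce at h
      have hkp : ((k:ℕ):ℤ) - 1 = ((k-1:ℕ):ℤ) := by
        rw [Nat.cast_sub hk1]; push_cast; ring
      have ha'1 : aext (fun m => a (N + m)) ((k:ℤ) - 1) = a (N + (k-1)) := by
        rw [hkp, aext_natCast]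
      rw [ha'1] at h
      -- rewrite F values
      have hFn : F (n:ℤ) = ζ^(N:ℤ) * f' (k:ℤ) := by
        rw [hFhi _ (by push_cast; omega)]
        rw [show (n:ℤ) - (N:ℤ) = (k:ℤ) from by rw [hnk]; push_cast; ring]
      have hFn1 : F ((n:ℤ) + 1) = ζ^(N:ℤ) * f' ((k:ℤ) + 1) := by
        rw [hFhi _ (by push_cast; omega)]
        rw [show (n:ℤ) + 1 - (N:ℤ) = (k:ℤ) + 1 from by rw [hnk]; push_cast; ring]
      have hFm1 : F ((n:ℤ) - 1) = ζ^(N:ℤ) * f' ((k:ℤ) - 1) := by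
        rw [hFhi _ (by push_cast; omega)]
        rw [show (n:ℤ) - 1 - (N:ℤ) = (k:ℤ) - 1 from by rw [hnk]; push_cast; ring]
      have haen : aext a ((n:ℤ) - 1) = a (n - 1) := by
        rw [show (n:ℤ) - 1 = ((n-1:ℕ):ℤ) from by rw [Nat.cast_sub (by omega : 1 ≤ n)]; push_cast; ring,
          aext_natCast]
      rw [hFn, hFn1, hFm1, haen]
      have hidx : N + (k - 1) = n - 1 := by omega
      rw [hidx] at h
      have hbk : b (N + k) = b n := by rw [← hnk]
      have hak : a (N + k) = a n := by rw [← hnk]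
      rw [hbk, hak] at h
      linear_combination (ζ^(N:ℤ)) * h
  set C1 : ℝ := ∑ m ∈ Finset.range N, ‖F (m:ℤ) * ζ^(-(m:ℤ)) - 1‖ with hC1def
  have hC1nn : 0 ≤ C1 := Finset.sum_nonneg fun _ _ => norm_nonneg _
  have hC0nn : (0:ℝ) ≤ 16/(‖ζ‖*‖ζ⁻¹-ζ‖) := by positivity
  have h2KC1 : 0 ≤ 2*K*C1 := mul_nonneg (mul_nonneg (by norm_num) hK.le) hC1nn
  refine ⟨F, 16/(‖ζ‖*‖ζ⁻¹-ζ‖) + 2*K*C1 + 1, by linarith, hsol, ?_⟩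
  intro n
  rcases lt_or_ge n N with hn | hn
  · have hle : ‖F (n:ℤ) * ζ^(-(n:ℤ)) - 1‖ ≤ C1 := by
      have h := Finset.single_le_sum (f := fun m : ℕ => ‖F (m:ℤ) * ζ ^ (-(m:ℤ)) - 1‖)
        (s := Finset.range N) (fun i _ => norm_nonneg _) (Finset.mem_range.2 hn)
      rw [hC1def]
      exact h
    have h1 : 1 ≤ 2 * (K * ρ n) := by have := hNmin n hn; linarith
    have h2 : C1 * 1 ≤ C1 * (2 * (K * ρ n)) := mul_le_mul_of_nonneg_left h1 hC1nn
    have h3 : (0:ℝ) ≤ (16/(‖ζ‖*‖ζ⁻¹-ζ‖) + 1) * ρ n :=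
      mul_nonneg (by linarith) (hρnn n)
    calc ‖F (n:ℤ) * ζ^(-(n:ℤ)) - 1‖ ≤ C1 := hle
      _ ≤ C1 * (2 * (K * ρ n)) := by linarith
      _ ≤ (16/(‖ζ‖*‖ζ⁻¹-ζ‖) + 2*K*C1 + 1) * ρ n := by nlinarith
  · set k := n - N with hkdef
    have hnk : n = N + k := by omega
    have hF : F (n:ℤ) * ζ^(-(n:ℤ)) = f' (k:ℤ) * ζ^(-(k:ℤ)) := by
      rw [hFhi _ (by push_cast; omega)]
      rw [show (n:ℤ) - (N:ℤ) = (k:ℤ) from by rw [hnk]; push_cast; ring]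
      have hzp : ζ^(N:ℤ) * ζ^(-(n:ℤ)) = ζ^(-(k:ℤ)) := by
        rw [← zpow_add₀ hζne]
        congr 1
        rw [hnk]; push_cast; ring
      calc ζ^(N:ℤ) * f' (k:ℤ) * ζ^(-(n:ℤ)) = f' (k:ℤ) * (ζ^(N:ℤ) * ζ^(-(n:ℤ))) := by ring
        _ = f' (k:ℤ) * ζ^(-(k:ℤ)) := by rw [hzp]
    rw [hF]
    have hb := hbd' k
    have h3 : (0:ℝ) ≤ (2*K*C1 + 1) * ρ n := mul_nonneg (by linarith) (hρnn n)
    calc ‖f' (k:ℤ) * ζ^(-(k:ℤ)) - 1‖ ≤ 16/(‖ζ‖*‖ζ⁻¹-ζ‖) * ρ (N + k) := hb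
      _ = 16/(‖ζ‖*‖ζ⁻¹-ζ‖) * ρ n := by rw [← hnk]
      _ ≤ (16/(‖ζ‖*‖ζ⁻¹-ζ‖) + 2*K*C1 + 1) * ρ n := by nlinarith
end
end

section
/- Let ζ ∈ ℂ with 0 < |ζ| ≤ 1, ζ ∉ {1, -1}, set z = (ζ + ζ⁻¹)/2 and √(z² - 1) := (ζ⁻¹ - ζ)/2. Let f = (f_n)_{n≥-1} be a sequence of complex numbers such that ∑_{m≥0} |ζ|^{-m} |(Vf)_m| < ∞, where (Vf)_m = (a_{m-1} - 1/2) f_{m-1} + b_m f_m + (a_m - 1/2) f_{m+1} (with a_{-1} = 1/2). If f satisfies the discrete Volterra equation f_n = ζⁿ - (1/√(z² - 1)) ∑_{m≥n+1} (ζ^{n-m} - ζ^{m-n}) (Vf)_m for every n ≥ -1, then f is a solution of the Jacobi equation at spectral parameter z. -/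
open Filter Finset MeasureTheory

noncomputable section

lemma Tsummable (ζ : ℂ) (hζ0 : 0 < ‖ζ‖) (hζ1 : ‖ζ‖ ≤ 1) (V : ℕ → ℂ)
    (hsum : Summable (fun m : ℕ => ‖ζ‖ ^ (-(m : ℤ)) * ‖V m‖)) (n : ℤ) :
    Summable (fun m : ℕ =>
      if n + 1 ≤ (m : ℤ) then (ζ ^ (n - (m : ℤ)) - ζ ^ ((m : ℤ) - n)) * V m else 0) := by
  have hne : ‖ζ‖ ≠ 0 := ne_of_gt hζ0
  apply Summable.of_norm_bounded (g := fun m : ℕ => 2 * ‖ζ‖ ^ n * (‖ζ‖ ^ (-(m : ℤ)) * ‖V m‖))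
    (hsum.mul_left _)
  intro m
  by_cases h : n + 1 ≤ (m : ℤ)
  · simp only [if_pos h]
    rw [norm_mul]
    have h1 : ‖ζ ^ (n - (m : ℤ)) - ζ ^ ((m : ℤ) - n)‖ ≤ 2 * ‖ζ‖ ^ (n - (m : ℤ)) := by
      calc ‖ζ ^ (n - (m : ℤ)) - ζ ^ ((m : ℤ) - n)‖
          ≤ ‖ζ ^ (n - (m : ℤ))‖ + ‖ζ ^ ((m : ℤ) - n)‖ := norm_sub_le _ _
        _ = ‖ζ‖ ^ (n - (m : ℤ)) + ‖ζ‖ ^ ((m : ℤ) - n) := by rw [norm_zpow, norm_zpow]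
        _ ≤ ‖ζ‖ ^ (n - (m : ℤ)) + ‖ζ‖ ^ (n - (m : ℤ)) := by
            have hle : ‖ζ‖ ^ ((m : ℤ) - n) ≤ ‖ζ‖ ^ (n - (m : ℤ)) :=
              le_trans (zpow_le_one₀ hζ0 hζ1 (by omega)) (one_le_zpow_of_nonpos₀ hζ0 hζ1 (by omega))
            linarith
        _ = 2 * ‖ζ‖ ^ (n - (m : ℤ)) := by ring
    calc ‖ζ ^ (n - (m : ℤ)) - ζ ^ ((m : ℤ) - n)‖ * ‖V m‖
        ≤ 2 * ‖ζ‖ ^ (n - (m : ℤ)) * ‖V m‖ := mul_le_mul_of_nonneg_right h1 (norm_nonneg _)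
      _ = 2 * ‖ζ‖ ^ n * (‖ζ‖ ^ (-(m : ℤ)) * ‖V m‖) := by
          rw [zpow_sub₀ hne]
          field_simp
          rw [mul_comm (‖ζ‖ ^ (m:ℤ)), mul_assoc, ← zpow_add₀ hne]
          simp
  · simp only [if_neg h, norm_zero]
    positivity

/-- a solution of the discrete Volterra integral equation solves the
Jacobi equation at spectral parameter `z = (ζ + ζ⁻¹)/2`. -/
theorem volterra_implies_jacobi
    (a b : ℕ → ℝ) (ha : ∀ n, 0 < a n)
    (ζ : ℂ) (hζ0 : 0 < ‖ζ‖) (hζ1 : ‖ζ‖ ≤ 1) (hζp : ζ ≠ 1) (hζm : ζ ≠ -1)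
    (z sq : ℂ) (hz : z = (ζ + ζ⁻¹) / 2) (hsq : sq = (ζ⁻¹ - ζ) / 2)
    (f : ℤ → ℂ)
    (hsum : Summable (fun m : ℕ => ‖ζ‖ ^ (-(m : ℤ)) * ‖jV a b f m‖))
    (hvolt : ∀ n : ℤ, -1 ≤ n →
      f n = ζ ^ n - (1 / sq) * ∑' m : ℕ,
        (if n + 1 ≤ (m : ℤ) then (ζ ^ (n - (m : ℤ)) - ζ ^ ((m : ℤ) - n)) * jV a b f m else 0)) :
    IsJacobiSol a b z f := by
  have hζne : ζ ≠ 0 := norm_pos_iff.mp hζ0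
  have hsqne : sq ≠ 0 := by
    intro h
    have key : (1 - ζ) * (1 + ζ) = 0 := by
      rw [show (0:ℂ) = ζ * (2 * sq) from by rw [h]; ring, hsq]
      field_simp
      ring
    rcases mul_eq_zero.mp key with h' | h'
    · exact hζp (by linear_combination -h')
    · exact hζm (by linear_combination h')
  set V : ℕ → ℂ := jV a b f with hV
  set T : ℤ → ℕ → ℂ := fun n m =>
    if n + 1 ≤ (m : ℤ) then (ζ ^ (n - (m : ℤ)) - ζ ^ ((m : ℤ) - n)) * V m else 0 with hT
  have hTsum : ∀ n : ℤ, Summable (T n) := fun n => Tsummable ζ hζ0 hζ1 V hsum n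
  intro n
  -- pointwise combination
  have key : (fun m : ℕ => (1/2 : ℂ) * T ((n:ℤ)-1) m + (1/2) * T ((n:ℤ)+1) m - z * T (n:ℤ) m)
      = fun m : ℕ => if m = n then sq * V n else 0 := by
    funext m
    simp only [hT]
    by_cases h2 : (n : ℤ) + 2 ≤ (m : ℤ)
    · rw [if_pos (by omega : (n:ℤ) - 1 + 1 ≤ (m:ℤ)), if_pos (by omega : (n:ℤ) + 1 + 1 ≤ (m:ℤ)),
        if_pos (by omega : (n:ℤ) + 1 ≤ (m:ℤ)), if_neg (by omega : ¬ m = n)]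
      rw [show (n:ℤ) - 1 - m = ((n:ℤ) - m) - 1 by ring, show (m:ℤ) - ((n:ℤ)-1) = ((m:ℤ) - n) + 1 by ring,
        show (n:ℤ) + 1 - m = ((n:ℤ) - m) + 1 by ring, show (m:ℤ) - ((n:ℤ)+1) = ((m:ℤ) - n) - 1 by ring,
        zpow_sub_one₀ hζne, zpow_add_one₀ hζne, zpow_add_one₀ hζne, zpow_sub_one₀ hζne, hz]
      field_simp
      ring
    · by_cases h1 : (m : ℤ) = n + 1
      · rw [if_pos (by omega : (n:ℤ) - 1 + 1 ≤ (m:ℤ)), if_neg (by omega : ¬ (n:ℤ) + 1 + 1 ≤ (m:ℤ)),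
          if_pos (by omega : (n:ℤ) + 1 ≤ (m:ℤ)), if_neg (by omega : ¬ m = n)]
        rw [show (n:ℤ) - 1 - m = (-2 : ℤ) by omega, show (m:ℤ) - ((n:ℤ)-1) = (2:ℤ) by omega,
          show (n:ℤ) - m = (-1 : ℤ) by omega, show (m:ℤ) - n = (1:ℤ) by omega, hz]
        rw [show ((-2 : ℤ)) = -(2:ℤ) by ring, zpow_neg, zpow_neg_one, zpow_one,
          show (2:ℤ) = 1 + 1 by ring, zpow_add_one₀ hζne, zpow_one]
        field_simp
        ring
      · by_cases h0 : (m : ℤ) = n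
        · rw [if_pos (by omega : (n:ℤ) - 1 + 1 ≤ (m:ℤ)), if_neg (by omega : ¬ (n:ℤ) + 1 + 1 ≤ (m:ℤ)),
            if_neg (by omega : ¬ (n:ℤ) + 1 ≤ (m:ℤ)), if_pos (by omega : m = n)]
          rw [show (n:ℤ) - 1 - m = (-1 : ℤ) by omega, show (m:ℤ) - ((n:ℤ)-1) = (1:ℤ) by omega,
            zpow_neg_one, zpow_one, hsq, show m = n from by omega]
          ring
        · rw [if_neg (by omega : ¬ (n:ℤ) - 1 + 1 ≤ (m:ℤ)), if_neg (by omega : ¬ (n:ℤ) + 1 + 1 ≤ (m:ℤ)),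
            if_neg (by omega : ¬ (n:ℤ) + 1 ≤ (m:ℤ)), if_neg (by omega : ¬ m = n)]
          ring
  have hS : (1/2 : ℂ) * ∑' m, T ((n:ℤ)-1) m + (1/2) * ∑' m, T ((n:ℤ)+1) m - z * ∑' m, T (n:ℤ) m
      = sq * V n := by
    rw [← tsum_mul_left, ← tsum_mul_left, ← tsum_mul_left,
      ← Summable.tsum_add ((hTsum _).mul_left _) ((hTsum _).mul_left _),
      ← Summable.tsum_sub (((hTsum _).mul_left _).add ((hTsum _).mul_left _)) ((hTsum _).mul_left _)]
    rw [show (fun m : ℕ => (1/2:ℂ) * T ((n:ℤ)-1) m + (1/2) * T ((n:ℤ)+1) m - z * T (n:ℤ) m) = _ from key]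
    exact tsum_ite_eq n (fun _ => sq * V n)
  have hS' : (1/sq) * ((1/2 : ℂ) * ∑' m, T ((n:ℤ)-1) m + (1/2) * ∑' m, T ((n:ℤ)+1) m
      - z * ∑' m, T (n:ℤ) m) = V n := by
    rw [hS]; field_simp
  have h1 := hvolt ((n:ℤ)-1) (by omega)
  have h2 := hvolt (n:ℤ) (by omega)
  have h3 := hvolt ((n:ℤ)+1) (by omega)
  have hfree : (1/2 : ℂ) * ζ ^ ((n:ℤ)-1) + (1/2) * ζ ^ ((n:ℤ)+1) - z * ζ ^ (n:ℤ) = 0 := by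
    rw [zpow_sub_one₀ hζne, zpow_add_one₀ hζne, hz]
    field_simp
    ring
  have hE : (1/2 : ℂ) * f ((n:ℤ)-1) + (1/2) * f ((n:ℤ)+1) - z * f (n:ℤ) = -(V n) := by
    rw [h1, h2, h3]
    linear_combination hfree - hS'
  simp only [hV, jV] at hE
  push_cast at hE ⊢
  linear_combination hE
end
end

section
/- Let α : ℕ → ℝ be nonnegative with ∑_{m≥0} α_m < ∞, let C > 0, and let G : ℕ × ℕ → ℂ satisfy |G(n,m)| ≤ C α_m for all n, m. Define iterates g⁽⁰⁾_n = 1 and g⁽ᵏ⁺¹⁾_n = ∑_{m≥n+1} G(n,m) g⁽ᵏ⁾_m. Then for every k ≥ 0 and every n ≥ 0 the defining series converges absolutely and |g⁽ᵏ⁾_n| ≤ (Cᵏ/k!) (∑_{m≥n+1} α_m)ᵏ. -/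
open Filter Finset

noncomputable section

private lemma key_pow_ineq (a b : ℝ) (hb : 0 ≤ b) (hab : b ≤ a) (k : ℕ) :
    (k + 1 : ℝ) * (b ^ k * (a - b)) ≤ a ^ (k + 1) - b ^ (k + 1) := by
  have hgeom : (∑ i ∈ Finset.range (k + 1), a ^ i * b ^ (k - i)) * (a - b)
      = a ^ (k + 1) - b ^ (k + 1) := by
    have h := geom_sum₂_mul a b (k + 1)
    simpa using h
  rw [← hgeom]
  have hterm : ∀ i ∈ Finset.range (k + 1), b ^ i * b ^ (k - i) = b ^ k := by
    intro i hi
    rw [← pow_add]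
    congr 1
    have := Finset.mem_range.mp hi
    omega
  have hsum_eq : ∑ i ∈ Finset.range (k + 1), b ^ i * b ^ (k - i) = (k + 1 : ℝ) * b ^ k := by
    rw [Finset.sum_congr rfl hterm, Finset.sum_const, Finset.card_range, nsmul_eq_mul]
    push_cast; ring
  have h1 : (k + 1 : ℝ) * b ^ k ≤ ∑ i ∈ Finset.range (k + 1), a ^ i * b ^ (k - i) := by
    rw [← hsum_eq]
    apply Finset.sum_le_sum
    intro i _
    have h3 : b ^ i ≤ a ^ i := pow_le_pow_left₀ hb hab i
    have hbk : (0:ℝ) ≤ b ^ (k - i) := pow_nonneg hb _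
    nlinarith
  have h2 := mul_le_mul_of_nonneg_right h1 (sub_nonneg.mpr hab)
  calc (k + 1 : ℝ) * (b ^ k * (a - b)) = (k + 1 : ℝ) * b ^ k * (a - b) := by ring
    _ ≤ _ := h2

/-- bounds on the iterates of a discrete backward Volterra operator
with an ℓ¹ kernel majorant. -/
theorem backward_volterra_iterates_bound
    (α : ℕ → ℝ) (hα : ∀ m, 0 ≤ α m) (hsum : Summable α)
    (C : ℝ) (hC : 0 < C)
    (G : ℕ → ℕ → ℂ) (hG : ∀ n m, ‖G n m‖ ≤ C * α m)
    (g : ℕ → ℕ → ℂ) (hg0 : ∀ n, g 0 n = 1)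
    (hgrec : ∀ k n, g (k + 1) n = ∑' m : ℕ, (if n + 1 ≤ m then G n m * g k m else 0)) :
    ∀ k n : ℕ,
      Summable (fun m : ℕ => ‖(if n + 1 ≤ m then G n m * g k m else 0)‖) ∧
      ‖g k n‖ ≤ C ^ k / (Nat.factorial k : ℝ) *
        (∑' m : ℕ, (if n + 1 ≤ m then α m else 0)) ^ k := by
  set T : ℕ → ℝ := fun n => ∑' m : ℕ, (if n + 1 ≤ m then α m else 0) with hTdef
  have hsummT : ∀ n, Summable (fun m : ℕ => if n + 1 ≤ m then α m else 0) := by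
    intro n
    apply Summable.of_nonneg_of_le (fun m => ?_) (fun m => ?_) hsum
    · split <;> simp [hα m]
    · split
      · exact le_refl _
      · exact hα m
  have hT0 : ∀ n, 0 ≤ T n := by
    intro n
    apply tsum_nonneg
    intro m
    split <;> simp [hα m]
  have hTstep : ∀ n, T n = α (n + 1) + T (n + 1) := by
    intro n
    have h := Summable.tsum_eq_add_tsum_ite (hsummT n) (n + 1)
    simp only [le_refl, if_pos] at h
    rw [hTdef]
    simp only
    rw [h]
    congr 1
    apply tsum_congr
    intro m
    by_cases h1 : m = n + 1
    · rw [if_pos h1, if_neg (by omega)]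
    · by_cases h3 : n + 2 ≤ m
      · rw [if_neg h1, if_pos (by omega), if_pos (by omega)]
      · rw [if_neg h1, if_neg (by omega), if_neg (by omega)]
  have hTanti : ∀ n, T (n + 1) ≤ T n := by
    intro n
    rw [hTstep n]
    linarith [hα (n + 1)]
  have hTmono : ∀ {a b : ℕ}, a ≤ b → T b ≤ T a := by
    intro a b hab
    induction b with
    | zero =>
      have ha : a = 0 := by omega
      rw [ha]
    | succ b ih =>
      rcases Nat.lt_or_ge a (b + 1) with h | h
      · exact le_trans (hTanti b) (ih (by omega))
      · have ha : a = b + 1 := by omega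
        rw [ha]
  -- key tsum estimate
  have hkey : ∀ k n : ℕ, ∑' m : ℕ, (if n + 1 ≤ m then α m * T m ^ k else 0)
      ≤ T n ^ (k + 1) / (k + 1) := by
    intro k n
    have hfnonneg : ∀ m, 0 ≤ (if n + 1 ≤ m then α m * T m ^ k else 0) := by
      intro m
      split
      · exact mul_nonneg (hα m) (pow_nonneg (hT0 m) k)
      · exact le_refl _
    have hfsumm : Summable (fun m : ℕ => if n + 1 ≤ m then α m * T m ^ k else 0) := by
      apply Summable.of_nonneg_of_le hfnonneg (fun m => ?_) (hsum.mul_right (T 0 ^ k))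
      split
      · exact mul_le_mul_of_nonneg_left (pow_le_pow_left₀ (hT0 _) (hTmono (Nat.zero_le _)) k) (hα m)
      · exact mul_nonneg (hα m) (pow_nonneg (hT0 0) k)
    apply Summable.tsum_le_of_sum_le hfsumm
    intro s
    obtain ⟨N, hN⟩ := s.exists_nat_subset_range
    have hN' : s ⊆ Finset.range (n + 1 + N) := hN.trans (by
      apply Finset.range_subset_range.mpr; omega)
    calc ∑ m ∈ s, (if n + 1 ≤ m then α m * T m ^ k else 0)
        ≤ ∑ m ∈ Finset.range (n + 1 + N), (if n + 1 ≤ m then α m * T m ^ k else 0) :=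
          Finset.sum_le_sum_of_subset_of_nonneg hN' (fun i _ _ => hfnonneg i)
      _ = ∑ m ∈ Finset.Ico (n + 1) (n + 1 + N), (α m * T m ^ k) := by
          rw [Finset.range_eq_Ico, ← Finset.sum_Ico_consecutive _ (Nat.zero_le (n + 1)) (by omega)]
          have h1 : ∑ m ∈ Finset.Ico 0 (n + 1), (if n + 1 ≤ m then α m * T m ^ k else 0) = 0 := by
            apply Finset.sum_eq_zero
            intro m hm
            have := Finset.mem_Ico.mp hm
            rw [if_neg (by omega)]
          rw [h1, zero_add]
          apply Finset.sum_congr rfl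
          intro m hm
          have := Finset.mem_Ico.mp hm
          rw [if_pos (by omega)]
      _ = ∑ i ∈ Finset.range N, (α (n + 1 + i) * T (n + 1 + i) ^ k) := by
          rw [Finset.sum_Ico_eq_sum_range]
          have hNN : n + 1 + N - (n + 1) = N := by omega
          rw [hNN]
      _ ≤ ∑ i ∈ Finset.range N, (T (n + i) ^ (k + 1) - T (n + (i + 1)) ^ (k + 1)) / (k + 1) := by
          apply Finset.sum_le_sum
          intro i _
          rw [le_div_iff₀ (by positivity)]
          have hab : T (n + i + 1) ≤ T (n + i) := hTanti (n + i)
          have hdiff : T (n + i) - T (n + i + 1) = α (n + i + 1) := by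
            rw [hTstep (n + i)]; ring
          have := key_pow_ineq (T (n + i)) (T (n + i + 1)) (hT0 _) hab k
          rw [hdiff] at this
          have heq : n + 1 + i = n + i + 1 := by omega
          rw [heq]
          calc α (n + i + 1) * T (n + i + 1) ^ k * (↑k + 1)
              = (k + 1 : ℝ) * (T (n + i + 1) ^ k * α (n + i + 1)) := by ring
            _ ≤ _ := this
      _ = (T (n + 0) ^ (k + 1) - T (n + N) ^ (k + 1)) / (k + 1) := by
          rw [← Finset.sum_div]
          congr 1
          have := Finset.sum_range_sub' (fun i => T (n + i) ^ (k + 1)) N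
          simpa using this
      _ ≤ T n ^ (k + 1) / (k + 1) := by
          gcongr (?_) / ((k : ℝ) + 1)
          have h2 : (0:ℝ) ≤ T (n + N) ^ (k + 1) := pow_nonneg (hT0 _) _
          have h1 : n + 0 = n := rfl
          rw [h1]
          linarith
  -- summability from a uniform bound on g k
  have hnsum : ∀ (k n : ℕ) (M : ℝ), (∀ m, ‖g k m‖ ≤ M) →
      Summable (fun m : ℕ => ‖(if n + 1 ≤ m then G n m * g k m else 0)‖) := by
    intro k n M hM
    have hM0 : (0:ℝ) ≤ M := le_trans (norm_nonneg _) (hM 0)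
    apply Summable.of_nonneg_of_le (fun m => norm_nonneg _) (fun m => ?_) (hsum.mul_left (C * M))
    split
    · rw [norm_mul]
      calc ‖G n m‖ * ‖g k m‖ ≤ (C * α m) * M :=
            mul_le_mul (hG n m) (hM m) (norm_nonneg _) (mul_nonneg hC.le (hα m))
        _ = C * M * α m := by ring
    · simp only [norm_zero]
      exact mul_nonneg (mul_nonneg hC.le hM0) (hα m)
  have hfact : ∀ k : ℕ, ((Nat.factorial k : ℝ)) ≠ 0 := by
    intro k
    exact_mod_cast Nat.factorial_ne_zero k
  have main : ∀ k n, ‖g k n‖ ≤ C ^ k / (Nat.factorial k : ℝ) * T n ^ k := by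
    intro k
    induction k with
    | zero =>
      intro n
      simp [hg0]
    | succ k ih =>
      intro n
      have hD0 : (0:ℝ) ≤ C ^ k / (Nat.factorial k : ℝ) := by positivity
      have hMk : ∀ m, ‖g k m‖ ≤ C ^ k / (Nat.factorial k : ℝ) * T 0 ^ k := fun m =>
        le_trans (ih m) (mul_le_mul_of_nonneg_left
          (pow_le_pow_left₀ (hT0 m) (hTmono (Nat.zero_le m)) k) hD0)
      have hns := hnsum k n _ hMk
      have hhnonneg : ∀ m : ℕ, (0:ℝ) ≤
          (if n + 1 ≤ m then C * α m * (C ^ k / (Nat.factorial k : ℝ) * T m ^ k) else 0) := by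
        intro m
        split
        · exact mul_nonneg (mul_nonneg hC.le (hα m)) (mul_nonneg hD0 (pow_nonneg (hT0 m) k))
        · exact le_refl _
      have hhsum : Summable (fun m : ℕ =>
          if n + 1 ≤ m then C * α m * (C ^ k / (Nat.factorial k : ℝ) * T m ^ k) else 0) := by
        apply Summable.of_nonneg_of_le hhnonneg (fun m => ?_)
          (hsum.mul_left (C * (C ^ k / (Nat.factorial k : ℝ) * T 0 ^ k)))
        split
        · have h1 : T m ^ k ≤ T 0 ^ k := pow_le_pow_left₀ (hT0 m) (hTmono (Nat.zero_le m)) k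
          calc C * α m * (C ^ k / (Nat.factorial k : ℝ) * T m ^ k)
              = (C * (C ^ k / (Nat.factorial k : ℝ)) * α m) * T m ^ k := by ring
            _ ≤ (C * (C ^ k / (Nat.factorial k : ℝ)) * α m) * T 0 ^ k := by
                apply mul_le_mul_of_nonneg_left h1
                exact mul_nonneg (mul_nonneg hC.le hD0) (hα m)
            _ = C * (C ^ k / (Nat.factorial k : ℝ) * T 0 ^ k) * α m := by ring
        · exact mul_nonneg (mul_nonneg hC.le (mul_nonneg hD0 (pow_nonneg (hT0 0) k))) (hα m)
      have hb : ∀ m : ℕ, ‖(if n + 1 ≤ m then G n m * g k m else 0)‖ ≤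
          (if n + 1 ≤ m then C * α m * (C ^ k / (Nat.factorial k : ℝ) * T m ^ k) else 0) := by
        intro m
        split
        · rw [norm_mul]
          exact mul_le_mul (hG n m) (ih m) (norm_nonneg _) (mul_nonneg hC.le (hα m))
        · simp
      calc ‖g (k + 1) n‖ = ‖∑' m : ℕ, (if n + 1 ≤ m then G n m * g k m else 0)‖ := by
            rw [hgrec]
        _ ≤ ∑' m : ℕ, ‖(if n + 1 ≤ m then G n m * g k m else 0)‖ := norm_tsum_le_tsum_norm hns
        _ ≤ ∑' m : ℕ, (if n + 1 ≤ m then C * α m * (C ^ k / (Nat.factorial k : ℝ) * T m ^ k) else 0) :=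
            Summable.tsum_le_tsum hb hns hhsum
        _ = (C ^ (k + 1) / (Nat.factorial k : ℝ)) *
            ∑' m : ℕ, (if n + 1 ≤ m then α m * T m ^ k else 0) := by
            rw [← tsum_mul_left]
            apply tsum_congr
            intro m
            split
            · ring
            · simp
        _ ≤ (C ^ (k + 1) / (Nat.factorial k : ℝ)) * (T n ^ (k + 1) / (k + 1)) :=
            mul_le_mul_of_nonneg_left (hkey k n) (by positivity)
        _ = C ^ (k + 1) / (Nat.factorial (k + 1) : ℝ) * T n ^ (k + 1) := by
            rw [Nat.factorial_succ, Nat.cast_mul, Nat.cast_add, Nat.cast_one]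
            rw [div_mul_div_comm, div_mul_eq_mul_div, mul_comm ((k:ℝ) + 1) (Nat.factorial k : ℝ)]
  intro k n
  exact ⟨hnsum k n _ (fun m => le_trans (main k m) (mul_le_mul_of_nonneg_left
    (pow_le_pow_left₀ (hT0 m) (hTmono (Nat.zero_le m)) k) (by positivity))), main k n⟩
end
end

section
/- Assume the trace class condition ∑_{n≥0}(|a_n - 1/2| + |b_n|) < ∞. Let ζ ∈ ℂ with 0 < |ζ| ≤ 1 and ζ ∉ {1, -1}, and set z = (ζ + ζ⁻¹)/2. Then there exists a constant C > 0 such that |P_n(z)| ≤ C |ζ|^{-n} for all n ≥ 0. -/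
open Filter Finset MeasureTheory

noncomputable section

/-- the orthonormal polynomials satisfy `|P_n(z)| ≤ C |ζ|^{-n}` under
the trace class condition. -/
theorem orthonormal_polynomials_bound
    (a b : ℕ → ℝ) (ha : ∀ n, 0 < a n)
    (htr : Summable (fun n : ℕ => |a n - 1/2| + |b n|))
    (ζ : ℂ) (hζ0 : 0 < ‖ζ‖) (hζ1 : ‖ζ‖ ≤ 1) (hζp : ζ ≠ 1) (hζm : ζ ≠ -1)
    (z : ℂ) (hz : z = (ζ + ζ⁻¹) / 2)
    (P : ℤ → ℂ) (hP : IsJacobiSol a b z P) (hPm : P (-1) = 0) (hP0 : P 0 = 1) :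
    ∃ C : ℝ, 0 < C ∧ ∀ n : ℕ, ‖P (n : ℤ)‖ ≤ C * ‖ζ‖ ^ (-(n : ℤ)) := by
  have hζne : ζ ≠ 0 := norm_pos_iff.mp hζ0
  set r : ℝ := ‖ζ‖ with hrdef
  have hrpos : 0 < r := hζ0
  have hrinv : ‖ζ⁻¹‖ = r⁻¹ := by rw [norm_inv]
  -- ζ⁻¹ - ζ ≠ 0
  have hDne : ζ⁻¹ - ζ ≠ 0 := by
    intro h
    have h1 : ζ⁻¹ = ζ := sub_eq_zero.mp h
    have h3 : ζ * ζ = 1 := by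
      have h3' := mul_inv_cancel₀ hζne
      rw [h1] at h3'; exact h3'
    have h2 : (ζ - 1) * (ζ + 1) = 0 := by linear_combination h3
    rcases mul_eq_zero.mp h2 with h4 | h4
    · exact hζp (sub_eq_zero.mp h4)
    · exact hζm (eq_neg_of_add_eq_zero_left h4)
  set D : ℝ := ‖ζ⁻¹ - ζ‖ with hDdef
  have hDpos : 0 < D := norm_pos_iff.mpr hDne
  set K : ℝ := (r⁻¹ + r + 2) / D with hKdef
  have hKpos : 0 < K := by positivity
  -- uniform lower bound δ for a
  obtain ⟨δ, hδpos, hδle⟩ : ∃ δ : ℝ, 0 < δ ∧ ∀ n, δ ≤ a n := by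
    have htz : Tendsto (fun n => |a n - 1/2|) atTop (nhds 0) := by
      refine squeeze_zero (fun n => abs_nonneg _) (fun n => ?_) htr.tendsto_atTop_zero
      have := abs_nonneg (b n); linarith
    obtain ⟨N, hN⟩ : ∃ N, ∀ n ≥ N, |a n - 1/2| < 1/4 := by
      have := htz.eventually (gt_mem_nhds (by norm_num : (0:ℝ) < 1/4))
      exact eventually_atTop.mp this
    set s : Finset ℝ := insert (1/4 : ℝ) ((Finset.range N).image a) with hs
    have hsne : s.Nonempty := ⟨1/4, Finset.mem_insert_self _ _⟩
    have hpos : ∀ w ∈ s, 0 < w := by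
      intro w hw
      rw [hs, Finset.mem_insert] at hw
      rcases hw with h | h
      · rw [h]; norm_num
      · obtain ⟨i, -, h⟩ := Finset.mem_image.mp h
        rw [← h]; exact ha i
    refine ⟨s.min' hsne, hpos _ (s.min'_mem hsne), ?_⟩
    intro n
    rcases lt_or_ge n N with h | h
    · refine s.min'_le _ ?_
      rw [hs, Finset.mem_insert]
      exact Or.inr (Finset.mem_image.mpr ⟨n, Finset.mem_range.mpr h, rfl⟩)
    · have h14 : (1:ℝ)/4 ≤ a n := by
        have := abs_lt.mp (hN n h); linarith [this.1]
      exact le_trans (s.min'_le _ (by rw [hs]; exact Finset.mem_insert_self _ _)) h14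
  have han : ∀ n : ℕ, (a n : ℂ) ≠ 0 := fun n => by
    exact_mod_cast (ha n).ne'
  have h2z : ζ + ζ⁻¹ = 2 * z := by rw [hz]; ring
  -- diagonalizing variables
  set x : ℕ → ℂ := fun n => P (n : ℤ) - ζ * P ((n : ℤ) - 1) with hxdef
  set y : ℕ → ℂ := fun n => P (n : ℤ) - ζ⁻¹ * P ((n : ℤ) - 1) with hydef
  set m : ℕ → ℝ := fun n => max ‖x n‖ ‖y n‖ with hmdef
  have hmnn : ∀ n, 0 ≤ m n := fun n => le_trans (norm_nonneg _) (le_max_left _ _)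
  set E : ℕ → ℂ := fun n => ((z - b n) / (a n) - 2 * z) * P (n : ℤ)
      + (1 - ((aext a ((n : ℤ) - 1) : ℝ) : ℂ) / (a n)) * P ((n : ℤ) - 1) with hEdef
  set ε : ℕ → ℝ := fun n => ‖(z - b n) / (a n) - 2 * z‖
      + ‖1 - ((aext a ((n : ℤ) - 1) : ℝ) : ℂ) / (a n)‖ with hεdef
  have hεnn : ∀ n, 0 ≤ ε n := fun n => add_nonneg (norm_nonneg _) (norm_nonneg _)
  -- recurrence with error term
  have hrec : ∀ n : ℕ, P ((n : ℤ) + 1) = 2 * z * P (n : ℤ) - P ((n : ℤ) - 1) + E n := by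
    intro n
    have key := hP n
    have := han n
    apply mul_left_cancel₀ (han n)
    simp only [hEdef]
    field_simp
    linear_combination key
  -- evolution of x and y
  have hx1 : ∀ n : ℕ, x (n + 1) = ζ⁻¹ * x n + E n := by
    intro n
    have e : (((n+1:ℕ)):ℤ) - 1 = (n:ℤ) := by push_cast; ring
    have e2 : (((n+1:ℕ)):ℤ) = (n:ℤ) + 1 := by push_cast; ring
    have hxn : x (n + 1) = P ((n : ℤ) + 1) - ζ * P (n : ℤ) := by
      simp only [hxdef]; rw [e, e2]
    rw [hxn, hrec n]; simp only [hxdef]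
    have hinv : ζ⁻¹ * ζ = 1 := inv_mul_cancel₀ hζne
    linear_combination P (n : ℤ) * h2z.symm + P ((n:ℤ)-1) * hinv
  have hy1 : ∀ n : ℕ, y (n + 1) = ζ * y n + E n := by
    intro n
    have e : (((n+1:ℕ)):ℤ) - 1 = (n:ℤ) := by push_cast; ring
    have e2 : (((n+1:ℕ)):ℤ) = (n:ℤ) + 1 := by push_cast; ring
    have hyn : y (n + 1) = P ((n : ℤ) + 1) - ζ⁻¹ * P (n : ℤ) := by
      simp only [hydef]; rw [e, e2]
    rw [hyn, hrec n]; simp only [hydef]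
    have hinv : ζ * ζ⁻¹ = 1 := mul_inv_cancel₀ hζne
    linear_combination P (n : ℤ) * h2z.symm + P ((n:ℤ)-1) * hinv
  -- recovery of P from x, y
  have hPx : ∀ n : ℕ, (ζ⁻¹ - ζ) * P (n : ℤ) = ζ⁻¹ * x n - ζ * y n := by
    intro n
    simp only [hxdef, hydef]
    ring
  have hPy : ∀ n : ℕ, (ζ⁻¹ - ζ) * P ((n : ℤ) - 1) = x n - y n := by
    intro n
    simp only [hxdef, hydef]
    ring
  -- norm bounds on P in terms of m
  have hconv : ∀ (X : ℝ), 0 ≤ X → ∀ n : ℕ, D * X ≤ (r⁻¹ + r + 2) * m n → X ≤ K * m n := by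
    intro X hX n h
    rw [hKdef, div_mul_eq_mul_div, le_div_iff₀ hDpos]
    linarith [h]
  have hPb : ∀ n : ℕ, ‖P (n : ℤ)‖ ≤ K * m n := by
    intro n
    refine hconv _ (norm_nonneg _) n ?_
    have h1 : D * ‖P (n : ℤ)‖ = ‖ζ⁻¹ * x n - ζ * y n‖ := by
      rw [← norm_mul, hPx n]
    rw [h1]
    calc ‖ζ⁻¹ * x n - ζ * y n‖ ≤ ‖ζ⁻¹ * x n‖ + ‖ζ * y n‖ := norm_sub_le _ _
      _ = r⁻¹ * ‖x n‖ + r * ‖y n‖ := by rw [norm_mul, norm_mul, hrinv]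
      _ ≤ (r⁻¹ + r + 2) * m n := by
          have h2 := le_max_left ‖x n‖ ‖y n‖
          have h3 := le_max_right ‖x n‖ ‖y n‖
          have h4 := hmnn n
          have h5 : (0:ℝ) < r⁻¹ := by positivity
          nlinarith
  have hPb' : ∀ n : ℕ, ‖P ((n : ℤ) - 1)‖ ≤ K * m n := by
    intro n
    refine hconv _ (norm_nonneg _) n ?_
    have h1 : D * ‖P ((n : ℤ) - 1)‖ = ‖x n - y n‖ := by
      rw [← norm_mul, hPy n]
    rw [h1]
    calc ‖x n - y n‖ ≤ ‖x n‖ + ‖y n‖ := norm_sub_le _ _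
      _ ≤ (r⁻¹ + r + 2) * m n := by
          have h2 := le_max_left ‖x n‖ ‖y n‖
          have h3 := le_max_right ‖x n‖ ‖y n‖
          have h4 := hmnn n
          have h5 : (0:ℝ) < r⁻¹ := by positivity
          nlinarith
  -- error bound
  have hEb : ∀ n : ℕ, ‖E n‖ ≤ ε n * (K * m n) := by
    intro n
    simp only [hEdef, hεdef]
    calc ‖((z - b n) / (a n) - 2 * z) * P (n : ℤ)
          + (1 - ((aext a ((n : ℤ) - 1) : ℝ) : ℂ) / (a n)) * P ((n : ℤ) - 1)‖
        ≤ ‖((z - b n) / (a n) - 2 * z) * P (n : ℤ)‖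
          + ‖(1 - ((aext a ((n : ℤ) - 1) : ℝ) : ℂ) / (a n)) * P ((n : ℤ) - 1)‖ :=
          norm_add_le _ _
      _ = ‖(z - b n) / (a n) - 2 * z‖ * ‖P (n : ℤ)‖
          + ‖1 - ((aext a ((n : ℤ) - 1) : ℝ) : ℂ) / (a n)‖ * ‖P ((n : ℤ) - 1)‖ := by
          rw [norm_mul, norm_mul]
      _ ≤ ‖(z - b n) / (a n) - 2 * z‖ * (K * m n)
          + ‖1 - ((aext a ((n : ℤ) - 1) : ℝ) : ℂ) / (a n)‖ * (K * m n) := by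
          gcongr <;> [exact hPb n; exact hPb' n]
      _ = (‖(z - b n) / (a n) - 2 * z‖
          + ‖1 - ((aext a ((n : ℤ) - 1) : ℝ) : ℂ) / (a n)‖) * (K * m n) := by ring
  -- one-step bound for m
  have hmstep : ∀ n : ℕ, m (n + 1) ≤ (r⁻¹ + ε n * K) * m n := by
    intro n
    have hrr : r ≤ r⁻¹ := by
      have h1 : (1:ℝ) ≤ r⁻¹ := by
        rw [← inv_one]
        exact inv_anti₀ hrpos hζ1
      linarith
    have hx2 : ‖x (n + 1)‖ ≤ (r⁻¹ + ε n * K) * m n := by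
      rw [hx1 n]
      calc ‖ζ⁻¹ * x n + E n‖ ≤ ‖ζ⁻¹ * x n‖ + ‖E n‖ := norm_add_le _ _
        _ ≤ r⁻¹ * m n + ε n * (K * m n) := by
            rw [norm_mul, hrinv]
            refine add_le_add ?_ (hEb n)
            exact mul_le_mul_of_nonneg_left (le_max_left _ _) (by positivity)
        _ = (r⁻¹ + ε n * K) * m n := by ring
    have hy2 : ‖y (n + 1)‖ ≤ (r⁻¹ + ε n * K) * m n := by
      rw [hy1 n]
      calc ‖ζ * y n + E n‖ ≤ ‖ζ * y n‖ + ‖E n‖ := norm_add_le _ _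
        _ ≤ r⁻¹ * m n + ε n * (K * m n) := by
            rw [norm_mul]
            refine add_le_add ?_ (hEb n)
            exact mul_le_mul hrr (le_max_right _ _) (norm_nonneg _) (by positivity)
        _ = (r⁻¹ + ε n * K) * m n := by ring
    exact max_le hx2 hy2
  -- initial value
  have hm0 : m 0 = 1 := by
    have hx0 : x 0 = 1 := by
      simp only [hxdef, Nat.cast_zero]
      rw [show (0:ℤ) - 1 = -1 by ring, hPm, hP0]; ring
    have hy0 : y 0 = 1 := by
      simp only [hydef, Nat.cast_zero]
      rw [show (0:ℤ) - 1 = -1 by ring, hPm, hP0]; ring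
    simp [hmdef, hx0, hy0]
  -- Gronwall product
  set c : ℕ → ℝ := fun n => ε n * (r * K) with hcdef
  have hcnn : ∀ n, 0 ≤ c n := fun n => mul_nonneg (hεnn n) (by positivity)
  have hind : ∀ n : ℕ, m n ≤ r⁻¹ ^ n * ∏ k ∈ Finset.range n, (1 + c k) := by
    intro n
    induction n with
    | zero => simp [hm0]
    | succ n ih =>
      have h2 : (r⁻¹ + ε n * K) = r⁻¹ * (1 + c n) := by
        simp only [hcdef]
        field_simp
      have h3 : (0:ℝ) ≤ r⁻¹ * (1 + c n) := by
        have := hcnn n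
        positivity
      calc m (n+1) ≤ (r⁻¹ * (1 + c n)) * m n := by rw [← h2]; exact hmstep n
        _ ≤ (r⁻¹ * (1 + c n)) * (r⁻¹ ^ n * ∏ k ∈ Finset.range n, (1 + c k)) :=
            mul_le_mul_of_nonneg_left ih h3
        _ = r⁻¹ ^ (n+1) * ∏ k ∈ Finset.range (n+1), (1 + c k) := by
            rw [Finset.prod_range_succ, pow_succ]; ring
  -- summability of ε
  have hnr : ∀ t : ℝ, ‖((t : ℝ) : ℂ)‖ = |t| := fun t => by
    rw [Complex.norm_real, Real.norm_eq_abs]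
  have ht1 : ∀ n : ℕ, ‖(z - b n) / (a n) - 2 * z‖
      ≤ (2 * ‖z‖ * |a n - 1/2| + |b n|) / δ := by
    intro n
    have e1 : (z - (b n:ℂ)) / ((a n : ℝ):ℂ) - 2 * z
        = (z * ((1 - 2 * a n : ℝ):ℂ) - ((b n : ℝ):ℂ)) / ((a n : ℝ):ℂ) := by
      field_simp [han n]
      push_cast
      ring
    rw [e1, norm_div, hnr (a n), abs_of_pos (ha n)]
    refine div_le_div₀ (by positivity) ?_ hδpos (hδle n)
    calc ‖z * ((1 - 2 * a n : ℝ):ℂ) - ((b n : ℝ):ℂ)‖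
        ≤ ‖z * ((1 - 2 * a n : ℝ):ℂ)‖ + ‖((b n : ℝ):ℂ)‖ := norm_sub_le _ _
      _ = ‖z‖ * |1 - 2 * a n| + |b n| := by rw [norm_mul, hnr, hnr]
      _ = 2 * ‖z‖ * |a n - 1/2| + |b n| := by
          rw [show (1 - 2 * a n) = (-2) * (a n - 1/2) by ring, abs_mul]
          norm_num
          ring
  have ht2 : ∀ n : ℕ, ‖1 - ((aext a ((n:ℤ)-1) : ℝ) : ℂ) / (a n)‖
      ≤ (|a n - 1/2| + |aext a ((n:ℤ)-1) - 1/2|) / δ := by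
    intro n
    have e2 : (1:ℂ) - ((aext a ((n:ℤ)-1) : ℝ) : ℂ) / ((a n : ℝ):ℂ)
        = (((a n - aext a ((n:ℤ)-1)) / a n : ℝ) : ℂ) := by
      have := han n
      rw [Complex.ofReal_div, Complex.ofReal_sub, sub_div, div_self this]
    rw [e2, hnr, abs_div, abs_of_pos (ha n)]
    refine div_le_div₀ (by positivity) ?_ hδpos (hδle n)
    calc |a n - aext a ((n:ℤ)-1)|
        = |(a n - 1/2) + (-(aext a ((n:ℤ)-1) - 1/2))| := by ring_nf
      _ ≤ |a n - 1/2| + |(-(aext a ((n:ℤ)-1) - 1/2))| := abs_add_le _ _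
      _ = |a n - 1/2| + |aext a ((n:ℤ)-1) - 1/2| := by rw [abs_neg]
  have hsa : Summable (fun n : ℕ => |a n - 1/2|) :=
    Summable.of_nonneg_of_le (fun n => abs_nonneg _)
      (fun n => by linarith [abs_nonneg (b n)]) htr
  have hg : Summable (fun n : ℕ => |aext a ((n:ℤ)-1) - 1/2|) := by
    apply (summable_nat_add_iff 1).1
    apply hsa.congr
    intro n
    have e : (((n+1:ℕ)):ℤ) - 1 = (n:ℤ) := by push_cast; ring
    show |a n - 1/2| = |aext a ((((n+1:ℕ)):ℤ) - 1) - 1/2|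
    rw [e]
    have hnn : ¬((n:ℤ) < 0) := by omega
    simp [aext, hnn]
  have hεsum : Summable ε := by
    refine Summable.of_nonneg_of_le hεnn (fun n => ?_)
      (((htr.add hg).mul_left ((2 * ‖z‖ + 1) / δ)))
    calc ε n ≤ (2 * ‖z‖ * |a n - 1/2| + |b n|) / δ
          + (|a n - 1/2| + |aext a ((n:ℤ)-1) - 1/2|) / δ := add_le_add (ht1 n) (ht2 n)
      _ ≤ (2 * ‖z‖ + 1) / δ * ((|a n - 1/2| + |b n|) + |aext a ((n:ℤ)-1) - 1/2|) := by
          rw [← add_div, div_mul_eq_mul_div]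
          gcongr ?_ / δ
          nlinarith [mul_nonneg (norm_nonneg z) (abs_nonneg (b n)),
            mul_nonneg (norm_nonneg z) (abs_nonneg (aext a ((n:ℤ)-1) - 1/2)),
            abs_nonneg (b n), abs_nonneg (a n - 1/2),
            abs_nonneg (aext a ((n:ℤ)-1) - 1/2), norm_nonneg z]
  have hcs : Summable c := by
    simp only [hcdef]
    exact hεsum.mul_right _
  set S : ℝ := ∑' n, c n with hSdef
  have hprodb : ∀ n : ℕ, ∏ k ∈ Finset.range n, (1 + c k) ≤ Real.exp S := by
    intro n
    calc ∏ k ∈ Finset.range n, (1 + c k) ≤ ∏ k ∈ Finset.range n, Real.exp (c k) :=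
        Finset.prod_le_prod (fun i _ => by linarith [hcnn i])
          (fun i _ => by rw [add_comm]; exact Real.add_one_le_exp _)
      _ = Real.exp (∑ k ∈ Finset.range n, c k) := by rw [Real.exp_sum]
      _ ≤ Real.exp S := Real.exp_le_exp.mpr (Summable.sum_le_tsum _ (fun i _ => hcnn i) hcs)
  -- conclusion
  refine ⟨K * Real.exp S, by positivity, fun n => ?_⟩
  have h1 : m n ≤ r⁻¹ ^ n * Real.exp S := by
    calc m n ≤ r⁻¹ ^ n * ∏ k ∈ Finset.range n, (1 + c k) := hind n
      _ ≤ r⁻¹ ^ n * Real.exp S := by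
          refine mul_le_mul_of_nonneg_left (hprodb n) (by positivity)
  have h2 : ‖P (n:ℤ)‖ ≤ K * (r⁻¹ ^ n * Real.exp S) :=
    (hPb n).trans (mul_le_mul_of_nonneg_left h1 hKpos.le)
  have h3 : r ^ (-(n:ℤ)) = r⁻¹ ^ n := by
    rw [zpow_neg, zpow_natCast, inv_pow]
  rw [hrdef] at h3 ⊢
  rw [h3]
  linarith [h2]
end
end

section
/- Assume the first-moment condition ∑_{n≥0} (n+1)(|a_n - 1/2| + |b_n|) < ∞. Let ζ ∈ ℂ with 0 < |ζ| ≤ 1 (the values ζ = ±1 are now allowed), and set z = (ζ + ζ⁻¹)/2. Then there exists a constant C > 0 such that |P_n(z)| ≤ C (n+1) |ζ|^{-n} for all n ≥ 0. -/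
open Filter Finset MeasureTheory

noncomputable section

def chebT (ζ : ℂ) : ℕ → ℂ := fun k => ∑ j ∈ Finset.range k, ζ ^ ((k : ℤ) - 1 - 2*j)

lemma chebT_zero (ζ : ℂ) : chebT ζ 0 = 0 := by simp [chebT]

lemma chebT_one (ζ : ℂ) : chebT ζ 1 = 1 := by simp [chebT]

lemma chebT_rec (ζ : ℂ) (hζ : ζ ≠ 0) (k : ℕ) :
    chebT ζ (k+2) = (ζ + ζ⁻¹) * chebT ζ (k+1) - chebT ζ k := by
  have h1 : ζ * chebT ζ (k+1) = chebT ζ (k+2) - ζ ^ (-(k:ℤ)-1) := by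
    unfold chebT
    push_cast
    rw [Finset.mul_sum, Finset.sum_range_succ (f := fun j : ℕ => ζ ^ ((k:ℤ) + 2 - 1 - 2*j))]
    have : ∀ j ∈ Finset.range (k+1), ζ * ζ ^ ((k:ℤ) + 1 - 1 - 2*j) = ζ ^ ((k:ℤ) + 2 - 1 - 2*j) := by
      intro j _
      rw [← zpow_one_add₀ hζ]
      ring_nf
    rw [Finset.sum_congr rfl this]
    have : ((k:ℤ) + 2 - 1 - 2*((k:ℕ)+1:ℕ)) = -(k:ℤ) - 1 := by push_cast; ring
    rw [this]; ring
  have h2 : ζ⁻¹ * chebT ζ (k+1) = chebT ζ k + ζ ^ (-(k:ℤ)-1) := by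
    unfold chebT
    push_cast
    rw [Finset.mul_sum, Finset.sum_range_succ (f := fun j : ℕ => ζ⁻¹ * ζ ^ ((k:ℤ) + 1 - 1 - 2*j))]
    have : ∀ j ∈ Finset.range k, ζ⁻¹ * ζ ^ ((k:ℤ) + 1 - 1 - 2*j) = ζ ^ ((k:ℤ) - 1 - 2*j) := by
      intro j _
      rw [← zpow_neg_one, ← zpow_add₀ hζ]
      ring_nf
    rw [Finset.sum_congr rfl this]
    have : ζ⁻¹ * ζ ^ ((k:ℤ) + 1 - 1 - 2*((k:ℕ):ℤ)) = ζ ^ (-(k:ℤ) - 1) := by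
      rw [← zpow_neg_one, ← zpow_add₀ hζ]; ring_nf
    rw [this]
  linear_combination -h1 - h2

lemma chebT_norm (ζ : ℂ) (hζ1 : ‖ζ‖ ≤ 1) (hζ0 : 0 < ‖ζ‖) (k : ℕ) :
    ‖chebT ζ (k+1)‖ ≤ ((k:ℝ)+1) * ‖ζ‖ ^ (-(k:ℤ)) := by
  unfold chebT
  calc ‖∑ j ∈ Finset.range (k+1), ζ ^ (((k:ℕ)+1 : ℤ) - 1 - 2*j)‖
      ≤ ∑ j ∈ Finset.range (k+1), ‖ζ ^ (((k:ℕ)+1 : ℤ) - 1 - 2*j)‖ := norm_sum_le _ _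
    _ ≤ ∑ j ∈ Finset.range (k+1), ‖ζ‖ ^ (-(k:ℤ)) := by
        apply Finset.sum_le_sum
        intro j hj
        rw [norm_zpow]
        apply zpow_le_zpow_right_of_le_one₀ hζ0 hζ1
        have : (j:ℤ) ≤ (k:ℤ) := by exact_mod_cast Nat.lt_succ_iff.mp (Finset.mem_range.mp hj)
        omega
    _ = ((k:ℝ)+1) * ‖ζ‖ ^ (-(k:ℤ)) := by
        rw [Finset.sum_const, Finset.card_range]; push_cast; ring

set_option maxHeartbeats 1000000 in
/-- under the first-moment condition, `|P_n(z)| ≤ C (n+1) |ζ|^{-n}` for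
all `ζ` with `0 < |ζ| ≤ 1`, including `ζ = ±1`. -/
theorem orthonormal_polynomials_bound_edge
    (a b : ℕ → ℝ) (ha : ∀ n, 0 < a n)
    (hm : Summable (fun n : ℕ => ((n : ℝ) + 1) * (|a n - 1/2| + |b n|)))
    (ζ : ℂ) (hζ0 : 0 < ‖ζ‖) (hζ1 : ‖ζ‖ ≤ 1)
    (z : ℂ) (hz : z = (ζ + ζ⁻¹) / 2)
    (P : ℤ → ℂ) (hP : IsJacobiSol a b z P) (hPm : P (-1) = 0) (hP0 : P 0 = 1) :
    ∃ C : ℝ, 0 < C ∧ ∀ n : ℕ, ‖P (n : ℤ)‖ ≤ C * ((n : ℝ) + 1) * ‖ζ‖ ^ (-(n : ℤ)) := by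
  have hζne : ζ ≠ 0 := norm_pos_iff.mp hζ0
  set r : ℝ := ‖ζ‖ with hr
  set w : ℕ → ℂ := jV a b P with hw
  -- the rearranged recurrence
  have hrec : ∀ k : ℕ, P ((k:ℤ)+1) = 2*z*P (k:ℤ) - P ((k:ℤ)-1) - 2 * w k := by
    intro k
    have h := hP k
    simp only [hw, jV]
    push_cast
    linear_combination 2 * h
  -- the Duhamel representation
  set Qe : ℕ → ℂ := fun k => chebT ζ k - 2 * ∑ i ∈ Finset.range k, chebT ζ i * w (k-1-i) with hQe
  have hQrec : ∀ k : ℕ, Qe (k+2) = 2*z*Qe (k+1) - Qe k - 2 * w k := by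
    intro k
    have e2 : ∑ i ∈ Finset.range (k+2), chebT ζ i * w (k+2-1-i)
        = ∑ i ∈ Finset.range k, chebT ζ (i+2) * w (k-1-i) + w k := by
      rw [Finset.sum_range_succ' (f := fun i => chebT ζ i * w (k+2-1-i))]
      rw [Finset.sum_range_succ' (f := fun i => chebT ζ (i+1) * w (k+2-1-(i+1)))]
      simp only [chebT_zero, chebT_one, zero_mul, add_zero, one_mul]
      congr 1
      · apply Finset.sum_congr rfl
        intro i _
        rw [show k+2-1-(i+1+1) = k-1-i by omega]
      · rw [show k+2-1-(0+1) = k by omega, show (0:ℕ)+1 = 1 from rfl, chebT_one, one_mul]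
    have e1 : ∑ i ∈ Finset.range (k+1), chebT ζ i * w (k+1-1-i)
        = ∑ i ∈ Finset.range k, chebT ζ (i+1) * w (k-1-i) := by
      rw [Finset.sum_range_succ' (f := fun i => chebT ζ i * w (k+1-1-i))]
      simp only [chebT_zero, zero_mul, add_zero]
      apply Finset.sum_congr rfl
      intro i _
      rw [show k+1-1-(i+1) = k-1-i by omega]
    have hrecT : ∀ i ∈ Finset.range k, chebT ζ (i+2) * w (k-1-i)
        = (2*z) * (chebT ζ (i+1) * w (k-1-i)) - chebT ζ i * w (k-1-i) := by
      intro i _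
      rw [chebT_rec ζ hζne i, hz]
      ring
    have hT2 : chebT ζ (k+2) = 2*z*chebT ζ (k+1) - chebT ζ k := by
      rw [chebT_rec ζ hζne k, hz]; ring
    simp only [hQe]
    rw [e2, e1, Finset.sum_congr rfl hrecT, Finset.sum_sub_distrib, ← Finset.mul_sum, hT2]
    ring
  have hPQ : ∀ k : ℕ, P ((k:ℤ)-1) = Qe k := by
    intro k
    induction k using Nat.twoStepInduction with
    | zero => simpa [hQe, chebT_zero] using hPm
    | one =>
      simp only [hQe]
      norm_num [chebT_one, chebT_zero]
      exact hP0
    | more k ih1 ih2 =>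
      have hcast1 : ((k+2:ℕ):ℤ) - 1 = (k:ℤ) + 1 := by push_cast; ring
      have hcast2 : ((k+1:ℕ):ℤ) - 1 = (k:ℤ) := by push_cast; ring
      rw [hcast1, hrec k, hQrec k, ← ih1]
      rw [hcast2] at ih2
      rw [← ih2]
  have hPrep : ∀ n : ℕ, P (n:ℤ) = chebT ζ (n+1)
      - 2 * ∑ m ∈ Finset.range n, chebT ζ (n-m) * w m := by
    intro n
    have key : ∑ i ∈ Finset.range (n+1), chebT ζ i * w (n+1-1-i)
        = ∑ m ∈ Finset.range n, chebT ζ (n-m) * w m := by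
      have hrefl := Finset.sum_range_reflect (fun m => chebT ζ (n-m) * w m) (n+1)
      rw [Finset.sum_range_succ (f := fun m => chebT ζ (n-m) * w m)] at hrefl
      simp only [Nat.sub_self, chebT_zero, zero_mul, add_zero] at hrefl
      rw [← hrefl]
      apply Finset.sum_congr rfl
      intro i hi
      have hi' := Finset.mem_range.mp hi
      rw [show n+1-1-i = n-i by omega, show n-(n-i) = i by omega]
    have h := hPQ (n+1)
    have hcast : ((n+1:ℕ):ℤ) - 1 = (n:ℤ) := by push_cast; ring
    rw [hcast] at h
    rw [h]
    simp only [hQe]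
    rw [key]
  clear hPQ hQrec hQe hrec hP0 hP
  -- weighted quantities
  set g : ℕ → ℝ := fun n => ‖P (n:ℤ)‖ * r^n / ((n:ℝ)+1) with hg
  have hg0 : ∀ n, 0 ≤ g n := by
    intro n; simp only [hg]; positivity
  have hgP : ∀ k : ℕ, ‖P (k:ℤ)‖ * r^k = ((k:ℝ)+1) * g k := by
    intro k; simp only [hg]; field_simp
  set h : ℕ → ℝ := fun n => Nat.rec (g 0) (fun k ih => max ih (g (k+1))) n with hh
  have hhsucc : ∀ n, h (n+1) = max (h n) (g (n+1)) := fun n => rfl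
  have hgh : ∀ k n, k ≤ n → g k ≤ h n := by
    intro k n hkn
    induction n with
    | zero =>
      have hk0 : k = 0 := Nat.le_zero.mp hkn
      subst hk0; exact le_rfl
    | succ n ihn =>
      by_cases hk : k ≤ n
      · exact (ihn hk).trans (le_max_left _ _)
      · have hk1 : k = n+1 := by omega
        subst hk1; exact le_max_right _ _
  have hh0 : ∀ n, 0 ≤ h n := fun n => le_trans (hg0 0) (hgh 0 n (Nat.zero_le n))
  set c : ℕ → ℝ := fun m =>
    2*((m:ℝ)+2) * (|aext a ((m:ℤ)-1) - 1/2| + |b m| + |a m - 1/2|) with hcdef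
  have hc0 : ∀ m, 0 ≤ c m := by
    intro m; simp only [hcdef]; positivity
  -- uniform bound for shifted terms
  have hPg : ∀ k m : ℕ, k ≤ m+1 → r^(m+1) * ‖P (k:ℤ)‖ ≤ ((m:ℝ)+2) * h (m+1) := by
    intro k m hk
    have h1 : r^(m+1) = r^(m+1-k) * r^k := by rw [← pow_add]; congr 1; omega
    rw [h1, show r^(m+1-k) * r^k * ‖P (k:ℤ)‖ = r^(m+1-k) * (‖P (k:ℤ)‖ * r^k) by ring, hgP k]
    have h2 : r^(m+1-k) * (((k:ℝ)+1) * g k) ≤ 1 * (((m:ℝ)+2) * h (m+1)) := by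
      apply mul_le_mul (pow_le_one₀ (le_of_lt hζ0) hζ1) ?_ ?_ zero_le_one
      · apply mul_le_mul ?_ (hgh k (m+1) (by omega)) (hg0 k) (by positivity)
        have : (k:ℝ) ≤ (m:ℝ)+1 := by exact_mod_cast hk
        linarith
      · exact mul_nonneg (by positivity) (hg0 k)
    linarith [h2]
  -- key perturbation bound
  have hW : ∀ m : ℕ, 2 * (r^(m+1) * ‖w m‖) ≤ c m * h (m+1) := by
    intro m
    have hwb : ‖w m‖ ≤ |aext a ((m:ℤ)-1) - 1/2| * ‖P ((m:ℤ)-1)‖ + |b m| * ‖P (m:ℤ)‖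
        + |a m - 1/2| * ‖P ((m:ℤ)+1)‖ := by
      simp only [hw, jV]
      refine (norm_add_le _ _).trans ?_
      have := norm_add_le (((aext a ((m:ℤ)-1) - 1/2 : ℝ) : ℂ) * P ((m:ℤ)-1)) ((b m : ℂ) * P (m:ℤ))
      simp only [norm_mul, Complex.norm_real, Real.norm_eq_abs] at this ⊢
      linarith
    have hT1 : r^(m+1) * ‖P ((m:ℤ)-1)‖ ≤ ((m:ℝ)+2) * h (m+1) := by
      cases m with
      | zero =>
        have e0 : ((0:ℕ):ℤ) - 1 = (-1 : ℤ) := by norm_num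
        rw [e0, hPm]
        simp only [norm_zero, mul_zero]
        have := hh0 1
        norm_num
        linarith [hh0 (0+1)]
      | succ k =>
        have e : ((k+1:ℕ):ℤ)-1 = ((k:ℕ):ℤ) := by push_cast; ring
        rw [e]
        exact hPg k (k+1) (by omega)
    have hT2 : r^(m+1) * ‖P (m:ℤ)‖ ≤ ((m:ℝ)+2) * h (m+1) := hPg m m (by omega)
    have hT3 : r^(m+1) * ‖P ((m:ℤ)+1)‖ ≤ ((m:ℝ)+2) * h (m+1) := by
      have e : (m:ℤ)+1 = ((m+1:ℕ):ℤ) := by push_cast; ring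
      rw [e]
      exact hPg (m+1) m le_rfl
    have hr0 : (0:ℝ) ≤ r^(m+1) := by positivity
    have step1 : 2 * (r^(m+1) * ‖w m‖) ≤ 2 * (|aext a ((m:ℤ)-1) - 1/2| * (r^(m+1) * ‖P ((m:ℤ)-1)‖)
        + |b m| * (r^(m+1) * ‖P (m:ℤ)‖) + |a m - 1/2| * (r^(m+1) * ‖P ((m:ℤ)+1)‖)) := by
      nlinarith [mul_le_mul_of_nonneg_left hwb hr0]
    refine step1.trans ?_
    have a1 := abs_nonneg (aext a ((m:ℤ)-1) - 1/2)
    have a2 := abs_nonneg (b m)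
    have a3 := abs_nonneg (a m - 1/2)
    have q1 := mul_le_mul_of_nonneg_left hT1 a1
    have q2 := mul_le_mul_of_nonneg_left hT2 a2
    have q3 := mul_le_mul_of_nonneg_left hT3 a3
    simp only [hcdef]
    nlinarith [q1, q2, q3]
  -- master inequality
  have hMaster : ∀ n : ℕ, g n ≤ 1 + ∑ m ∈ Finset.range n, c m * h (m+1) := by
    intro n
    have hrn : (0:ℝ) < r^n := pow_pos hζ0 n
    have hch : ∀ m ∈ Finset.range n, ‖chebT ζ (n-m) * w m‖
        ≤ ((n:ℝ)+1) * (r^n)⁻¹ * (r^(m+1) * ‖w m‖) := by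
      intro m hm
      have hmn := Finset.mem_range.mp hm
      rw [norm_mul]
      have hb := chebT_norm ζ hζ1 hζ0 (n-m-1)
      rw [show n-m-1+1 = n-m by omega, zpow_neg, zpow_natCast] at hb
      calc ‖chebT ζ (n-m)‖ * ‖w m‖
          ≤ ((((n-m-1:ℕ)):ℝ)+1) * (r^(n-m-1))⁻¹ * ‖w m‖ :=
            mul_le_mul_of_nonneg_right hb (norm_nonneg _)
        _ ≤ ((n:ℝ)+1) * (r^n)⁻¹ * (r^(m+1) * ‖w m‖) := by
            have h2 : (r^n)⁻¹ * r^(m+1) = (r^(n-m-1))⁻¹ := by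
              have h3 : r^n = r^(n-m-1) * r^(m+1) := by rw [← pow_add]; congr 1; omega
              rw [h3, mul_inv, mul_assoc,
                inv_mul_cancel₀ (by positivity : (r:ℝ)^(m+1) ≠ 0), mul_one]
            rw [show ((n:ℝ)+1) * (r^n)⁻¹ * (r^(m+1) * ‖w m‖)
                = (((n:ℝ)+1) * ((r^n)⁻¹ * r^(m+1))) * ‖w m‖ by ring, h2]
            apply mul_le_mul_of_nonneg_right ?_ (norm_nonneg _)
            apply mul_le_mul_of_nonneg_right ?_ (by positivity)
            have : ((n-m-1:ℕ):ℝ) ≤ (n:ℝ) := by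
              exact_mod_cast (Nat.sub_le _ _).trans (Nat.sub_le _ _)
            linarith
    have hnorm : ‖P (n:ℤ)‖ ≤ ((n:ℝ)+1) * (r^n)⁻¹ * (1 + ∑ m ∈ Finset.range n, c m * h (m+1)) := by
      rw [hPrep n]
      refine (norm_sub_le _ _).trans ?_
      have hcb := chebT_norm ζ hζ1 hζ0 n
      rw [zpow_neg, zpow_natCast] at hcb
      have hsb : ‖(2:ℂ) * ∑ m ∈ Finset.range n, chebT ζ (n-m) * w m‖
          ≤ 2 * ∑ m ∈ Finset.range n, ‖chebT ζ (n-m) * w m‖ := by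
        rw [norm_mul]
        have h2 : ‖(2:ℂ)‖ = 2 := by norm_num
        rw [h2]
        exact mul_le_mul_of_nonneg_left (norm_sum_le _ _) (by norm_num)
      have hsum4 : 2 * ∑ m ∈ Finset.range n, (r^(m+1) * ‖w m‖)
          ≤ ∑ m ∈ Finset.range n, c m * h (m+1) := by
        rw [Finset.mul_sum]
        exact Finset.sum_le_sum fun m _ => hW m
      have hpos : (0:ℝ) ≤ ((n:ℝ)+1) * (r^n)⁻¹ := by positivity
      have h5 : ∑ m ∈ Finset.range n, ‖chebT ζ (n-m) * w m‖
          ≤ ((n:ℝ)+1) * (r^n)⁻¹ * ∑ m ∈ Finset.range n, (r^(m+1) * ‖w m‖) := by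
        refine (Finset.sum_le_sum hch).trans_eq ?_
        rw [Finset.mul_sum]
      calc ‖chebT ζ (n+1)‖ + ‖(2:ℂ) * ∑ m ∈ Finset.range n, chebT ζ (n-m) * w m‖
          ≤ ((n:ℝ)+1) * (r^n)⁻¹ + 2 * (((n:ℝ)+1) * (r^n)⁻¹ * ∑ m ∈ Finset.range n, (r^(m+1) * ‖w m‖)) := by
            have h6 := hsb.trans (by linarith : 2 * ∑ m ∈ Finset.range n, ‖chebT ζ (n-m) * w m‖
              ≤ 2 * (((n:ℝ)+1) * (r^n)⁻¹ * ∑ m ∈ Finset.range n, (r^(m+1) * ‖w m‖)))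
            linarith
        _ = ((n:ℝ)+1) * (r^n)⁻¹ * (1 + 2 * ∑ m ∈ Finset.range n, (r^(m+1) * ‖w m‖)) := by ring
        _ ≤ ((n:ℝ)+1) * (r^n)⁻¹ * (1 + ∑ m ∈ Finset.range n, c m * h (m+1)) := by
            apply mul_le_mul_of_nonneg_left ?_ hpos
            linarith
    simp only [hg]
    rw [div_le_iff₀ (by positivity)]
    calc ‖P (n:ℤ)‖ * r^n ≤ (((n:ℝ)+1) * (r^n)⁻¹ * (1 + ∑ m ∈ Finset.range n, c m * h (m+1))) * r^n :=
          mul_le_mul_of_nonneg_right hnorm (le_of_lt hrn)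
      _ = (1 + ∑ m ∈ Finset.range n, c m * h (m+1)) * ((n:ℝ)+1) := by
          field_simp
  -- summability of c
  have hcs : Summable c := by
    set t : ℕ → ℝ := fun m => ((m:ℝ)+1) * (|a m - 1/2| + |b m|) with ht
    set ts : ℕ → ℝ := fun m => Nat.rec 0 (fun k _ => t k) m with hts'
    have hts : Summable ts := by
      apply (summable_nat_add_iff 1).mp
      exact hm
    have hcle : ∀ m, c m ≤ 8 * (t m + ts m) := by
      intro m
      cases m with
      | zero =>
        have e0 : aext a ((0:ℤ) - 1) = 1/2 := by simp [aext]
        simp only [hcdef, ht, hts']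
        rw [show ((0:ℕ):ℤ) = (0:ℤ) by norm_num, e0]
        norm_num
        nlinarith [abs_nonneg (b 0), abs_nonneg (a 0 - 1/2)]
      | succ k =>
        have e1 : aext a (((k+1:ℕ):ℤ) - 1) = a k := by
          have : ((k+1:ℕ):ℤ) - 1 = (k:ℤ) := by push_cast; ring
          rw [this]
          simp [aext]
        simp only [hcdef, ht, hts']
        rw [e1]
        push_cast
        nlinarith [abs_nonneg (a k - 1/2), abs_nonneg (b k), abs_nonneg (b (k+1)),
          abs_nonneg (a (k+1) - 1/2), Nat.cast_nonneg (α := ℝ) k]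
    exact Summable.of_nonneg_of_le hc0 hcle ((hm.add hts).mul_left 8)
  -- tail smallness
  obtain ⟨N, hN⟩ : ∃ N : ℕ, ∀ m, N ≤ m → c m ≤ 1/2 := by
    have h1 := hcs.tendsto_atTop_zero
    have h2 := h1.eventually (eventually_le_nhds (by norm_num : (0:ℝ) < 1/2))
    exact eventually_atTop.mp h2
  -- initial bound
  set B : ℝ := 1 + ∑ j ∈ Finset.range (N+1), g j with hB
  have hB1 : 1 ≤ B := by
    have : 0 ≤ ∑ j ∈ Finset.range (N+1), g j := Finset.sum_nonneg fun j _ => hg0 j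
    simp only [hB]; linarith
  have hgB : ∀ j, j ≤ N → g j ≤ B := by
    intro j hj
    have h1 : g j ≤ ∑ i ∈ Finset.range (N+1), g i :=
      Finset.single_le_sum (fun i _ => hg0 i) (Finset.mem_range.mpr (by omega))
    simp only [hB]; linarith
  have hhB : ∀ k, k ≤ N → h k ≤ B := by
    intro k hk
    induction k with
    | zero => exact hgB 0 (by omega)
    | succ k ih =>
      rw [hhsucc k]
      exact max_le (ih (by omega)) (hgB (k+1) hk)
  -- the Gronwall majorant
  set K : ℕ → ℝ := fun k => (2*B) * ∏ m ∈ Finset.range (k-1), (1+2*c m) with hK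
  have hKfac : ∀ m, (1:ℝ) ≤ 1+2*c m := fun m => by linarith [hc0 m]
  have hprod1 : ∀ s : Finset ℕ, (1:ℝ) ≤ ∏ m ∈ s, (1+2*c m) := by
    intro s
    calc (1:ℝ) = ∏ m ∈ s, 1 := by simp
      _ ≤ ∏ m ∈ s, (1+2*c m) :=
        Finset.prod_le_prod (fun i _ => zero_le_one) (fun i _ => hKfac i)
  have hK2B : ∀ k, 2*B ≤ K k := by
    intro k
    simp only [hK]
    nlinarith [hprod1 (Finset.range (k-1)), hB1]
  have hKmono : ∀ k k', k ≤ k' → K k ≤ K k' := by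
    intro k k' hkk
    simp only [hK]
    apply mul_le_mul_of_nonneg_left ?_ (by linarith)
    have hsplit := Finset.prod_range_mul_prod_Ico (fun m => 1+2*c m) (by omega : k-1 ≤ k'-1)
    nlinarith [hprod1 (Finset.Ico (k-1) (k'-1)), hprod1 (Finset.range (k-1)), hsplit]
  have hK1 : K 1 = 2*B := by simp [hK]
  have hKstep : ∀ m : ℕ, K (m+2) = K (m+1) * (1+2*c m) := by
    intro m
    simp only [hK, show m+2-1 = m+1 from rfl, show m+1-1 = m from rfl, Finset.prod_range_succ]
    ring
  have htel : ∀ j : ℕ, 2 * ∑ m ∈ Finset.range j, c m * K (m+1) = K (j+1) - K 1 := by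
    intro j
    have h1 := Finset.sum_range_sub (fun m => K (m+1)) j
    rw [← h1, Finset.mul_sum]
    apply Finset.sum_congr rfl
    intro m _
    rw [hKstep m]
    ring
  -- Gronwall induction
  have hmain : ∀ n, h n ≤ K n := by
    intro n
    induction n using Nat.strong_induction_on with
    | _ n ih =>
      rcases le_or_gt n N with hnN | hnN
      · exact (hhB n hnN).trans (le_trans (by linarith [hB1]) (hK2B n))
      · obtain ⟨j, rfl⟩ : ∃ j, n = j+1 := ⟨n-1, by omega⟩
        have hjN : N ≤ j := by omega
        have hsum : ∑ m ∈ Finset.range (j+1), c m * h (m+1)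
            ≤ (K (j+1) - 2*B)/2 + (1/2) * h (j+1) := by
          rw [Finset.sum_range_succ]
          have h2 : ∑ m ∈ Finset.range j, c m * h (m+1) ≤ ∑ m ∈ Finset.range j, c m * K (m+1) :=
            Finset.sum_le_sum fun m hm =>
              mul_le_mul_of_nonneg_left (ih (m+1) (by
                have := Finset.mem_range.mp hm; omega)) (hc0 m)
          have h3 := htel j
          have h4 : c j * h (j+1) ≤ (1/2) * h (j+1) :=
            mul_le_mul_of_nonneg_right (hN j hjN) (hh0 (j+1))
          rw [hK1] at h3
          linarith
        have hgn := hMaster (j+1)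
        rcases le_total (g (j+1)) (h j) with hcc | hcc
        · have heq : h (j+1) = h j := by rw [hhsucc j, max_eq_left hcc]
          rw [heq]
          exact (ih j (by omega)).trans (hKmono j (j+1) (by omega))
        · have heq : h (j+1) = g (j+1) := by rw [hhsucc j, max_eq_right hcc]
          rw [heq] at hsum ⊢
          linarith [hB1]
  -- bound on K
  set Sc : ℝ := ∑' m, c m with hSc
  have hKbd : ∀ k, K k ≤ 2*B*Real.exp (2*Sc) := by
    intro k
    simp only [hK]
    have h1 : ∏ m ∈ Finset.range (k-1), (1+2*c m) ≤ ∏ m ∈ Finset.range (k-1), Real.exp (2*c m) :=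
      Finset.prod_le_prod (fun i _ => by linarith [hc0 i])
        (fun i _ => by linarith [Real.add_one_le_exp (2*c i)])
    have h2 : ∏ m ∈ Finset.range (k-1), Real.exp (2*c m)
        = Real.exp (∑ m ∈ Finset.range (k-1), 2*c m) := (Real.exp_sum _ _).symm
    have h3 : ∑ m ∈ Finset.range (k-1), 2*c m ≤ 2*Sc := by
      have h4 := Summable.sum_le_tsum (Finset.range (k-1))
        (fun i _ => by linarith [hc0 i] : ∀ i ∉ Finset.range (k-1), 0 ≤ 2*c i) (hcs.mul_left 2)
      rwa [tsum_mul_left] at h4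
    have h5 : ∏ m ∈ Finset.range (k-1), (1+2*c m) ≤ Real.exp (2*Sc) := by
      rw [h2] at h1
      exact h1.trans (Real.exp_le_exp.mpr h3)
    nlinarith [hB1, Real.exp_pos (2*Sc)]
  -- conclusion
  refine ⟨2*B*Real.exp (2*Sc), ?_, ?_⟩
  · have hB0 : (0:ℝ) < B := lt_of_lt_of_le one_pos hB1
    exact mul_pos (mul_pos two_pos hB0) (Real.exp_pos _)
  · intro n
    have hgn : g n ≤ 2*B*Real.exp (2*Sc) := (hgh n n le_rfl).trans ((hmain n).trans (hKbd n))
    have hrn : (0:ℝ) < r^n := pow_pos hζ0 n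
    simp only [hg] at hgn
    rw [div_le_iff₀ (by positivity)] at hgn
    rw [zpow_neg, zpow_natCast]
    rw [show (2*B*Real.exp (2*Sc)) * ((n:ℝ)+1) * (‖ζ‖^n)⁻¹
        = (2*B*Real.exp (2*Sc) * ((n:ℝ)+1)) / ‖ζ‖^n by ring, le_div_iff₀ hrn]
    linarith
end
end

section
/- Let λ ∈ (-1,1) and θ = arccos λ ∈ (0,π). Let f⁺ = (f⁺_n)_{n≥-1} be a solution of the Jacobi equation at spectral parameter λ such that f⁺_n e^{inθ} → 1 as n → ∞. Then f⁺_{-1} ≠ 0 (equivalently, the boundary value ω(λ+i0) = -f⁺_{-1}/2 of the Wronskian of P and the Jost solution does not vanish on (-1,1)). -/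
open Filter Finset MeasureTheory

noncomputable section

local notation "c" => (starRingEnd ℂ)

/-- the boundary value of the Wronskian does not vanish on `(-1,1)`:
the Jost solution satisfies `f_{-1} ≠ 0`. -/
theorem jost_wronskian_nonvanishing
    (a b : ℕ → ℝ) (ha : ∀ n, 0 < a n)
    (lam : ℝ) (hl1 : -1 < lam) (hl2 : lam < 1)
    (θ : ℝ) (hθ : θ = Real.arccos lam)
    (f : ℤ → ℂ) (hf : IsJacobiSol a b (lam : ℂ) f)
    (hasym : Filter.Tendsto (fun n : ℕ => f (n : ℤ) * Complex.exp (Complex.I * n * θ))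
      Filter.atTop (nhds 1)) :
    f (-1) ≠ 0 := by
  intro h0
  -- conjugated equation
  have hconj : ∀ n : ℕ, (aext a ((n : ℤ) - 1) : ℂ) * c (f ((n : ℤ) - 1)) + (b n : ℂ) * c (f (n : ℤ))
      + (a n : ℂ) * c (f ((n : ℤ) + 1)) = (lam : ℂ) * c (f (n : ℤ)) := by
    intro n
    have := congrArg c (hf n)
    simpa [map_add, map_mul, Complex.conj_ofReal] using this
  have haext : ∀ n : ℕ, aext a ((n : ℤ)) = a n := by
    intro n; simp [aext]
  -- Wronskian vanishes
  have hW : ∀ n : ℕ, (a n : ℂ) * (f (n : ℤ) * c (f ((n : ℤ) + 1)) - f ((n : ℤ) + 1) * c (f (n : ℤ))) = 0 := by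
    intro n
    induction n with
    | zero =>
      have h := hf 0
      have hcc := hconj 0
      simp only [Nat.cast_zero, zero_sub, zero_add] at h hcc ⊢
      rw [h0] at h
      rw [h0] at hcc
      simp only [map_zero, mul_zero, zero_add] at h hcc
      linear_combination f (0:ℤ) * hcc - c (f (0:ℤ)) * h
    | succ n ih =>
      have h := hf (n + 1)
      have hcc := hconj (n + 1)
      have e1 : ((n + 1 : ℕ) : ℤ) - 1 = (n : ℤ) := by push_cast; ring
      have e2 : ((n + 1 : ℕ) : ℤ) = (n : ℤ) + 1 := by push_cast; ring
      rw [e1, e2, haext n] at h hcc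
      rw [e2]
      linear_combination ih - c (f ((n:ℤ) + 1)) * h + f ((n:ℤ) + 1) * hcc
  have hB : ∀ n : ℕ, f (n : ℤ) * c (f ((n : ℤ) + 1)) - f ((n : ℤ) + 1) * c (f (n : ℤ)) = 0 := by
    intro n
    have hane : (a n : ℂ) ≠ 0 := by exact_mod_cast (ha n).ne'
    exact (mul_eq_zero.mp (hW n)).resolve_left hane
  -- asymptotics
  set G : ℕ → ℂ := fun n => f (n : ℤ) * Complex.exp (Complex.I * n * θ) with hG
  have hGs : Tendsto (fun n => G (n + 1)) atTop (nhds 1) :=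
    hasym.comp (tendsto_add_atTop_nat 1)
  have hGc : Tendsto (fun n => c (G (n + 1))) atTop (nhds 1) := by
    have := ((Complex.continuous_conj.tendsto 1).comp hGs)
    simpa [Function.comp_def] using this
  have hGc0 : Tendsto (fun n => c (G n)) atTop (nhds 1) := by
    have := ((Complex.continuous_conj.tendsto 1).comp hasym)
    simpa [Function.comp_def] using this
  have hcIθ : c (Complex.I * θ) = -(Complex.I * θ) := by
    simp [Complex.conj_I]
  -- key identity for the first product
  have key : ∀ n : ℕ, f (n : ℤ) * c (f ((n : ℤ) + 1))
      = G n * c (G (n + 1)) * Complex.exp (Complex.I * θ) := by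
    intro n
    have hconjexp : c (Complex.exp (Complex.I * (n + 1 : ℕ) * θ))
        = Complex.exp (-(Complex.I * (n + 1 : ℕ) * θ)) := by
      rw [← Complex.exp_conj]
      congr 1
      simp [Complex.conj_I]
    have hexp : Complex.exp (Complex.I * n * θ) * Complex.exp (-(Complex.I * (n + 1 : ℕ) * θ))
        * Complex.exp (Complex.I * θ) = 1 := by
      rw [← Complex.exp_add, ← Complex.exp_add, ← Complex.exp_zero]
      congr 1
      push_cast
      ring
    have e2 : ((n + 1 : ℕ) : ℤ) = (n : ℤ) + 1 := by push_cast; ring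
    simp only [hG]
    rw [map_mul, hconjexp, e2]
    calc f (n:ℤ) * c (f ((n:ℤ)+1))
        = f (n:ℤ) * c (f ((n:ℤ)+1)) * (Complex.exp (Complex.I * n * θ)
            * Complex.exp (-(Complex.I * (n + 1 : ℕ) * θ)) * Complex.exp (Complex.I * θ)) := by
          rw [hexp, mul_one]
      _ = f (n:ℤ) * Complex.exp (Complex.I * n * θ)
            * (c (f ((n:ℤ)+1)) * Complex.exp (-(Complex.I * (n + 1 : ℕ) * θ)))
            * Complex.exp (Complex.I * θ) := by ring
  have key2 : ∀ n : ℕ, f ((n : ℤ) + 1) * c (f (n : ℤ))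
      = c (G n) * G (n + 1) * Complex.exp (-(Complex.I * θ)) := by
    intro n
    have h2 := congrArg c (key n)
    simp only [map_mul, Complex.conj_conj, ← Complex.exp_conj, hcIθ] at h2
    linear_combination h2
  -- limit of the Wronskian-like quantity
  have hlim : Tendsto (fun n : ℕ => f (n : ℤ) * c (f ((n : ℤ) + 1)) - f ((n : ℤ) + 1) * c (f (n : ℤ)))
      atTop (nhds (Complex.exp (Complex.I * θ) - Complex.exp (-(Complex.I * θ)))) := by
    have h1 : Tendsto (fun n : ℕ => G n * c (G (n + 1)) * Complex.exp (Complex.I * θ))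
        atTop (nhds (1 * 1 * Complex.exp (Complex.I * θ))) :=
      (hasym.mul hGc).mul tendsto_const_nhds
    have h2 : Tendsto (fun n : ℕ => c (G n) * G (n + 1) * Complex.exp (-(Complex.I * θ)))
        atTop (nhds (1 * 1 * Complex.exp (-(Complex.I * θ)))) :=
      (hGc0.mul hGs).mul tendsto_const_nhds
    have h3 := h1.sub h2
    simp only [one_mul] at h3
    refine h3.congr ?_
    intro n
    rw [← key n, ← key2 n]
  have hzero : Tendsto (fun n : ℕ => f (n : ℤ) * c (f ((n : ℤ) + 1)) - f ((n : ℤ) + 1) * c (f (n : ℤ)))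
      atTop (nhds 0) := by
    refine tendsto_const_nhds.congr ?_
    intro n; exact (hB n).symm
  have heq : Complex.exp (Complex.I * θ) - Complex.exp (-(Complex.I * θ)) = 0 :=
    tendsto_nhds_unique hlim hzero
  -- contradiction: sin θ > 0
  have hsin : Real.sin θ > 0 := by
    rw [hθ, Real.sin_arccos]
    have h5 : 0 < 1 - lam ^ 2 := by nlinarith
    positivity
  have hdiff : Complex.exp (Complex.I * θ) - Complex.exp (-(Complex.I * θ))
      = 2 * Real.sin θ * Complex.I := by
    rw [mul_comm Complex.I (θ:ℂ), ← neg_mul, Complex.exp_mul_I, Complex.exp_mul_I]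
    rw [Complex.cos_neg, Complex.sin_neg]
    rw [Complex.ofReal_sin]
    ring
  rw [hdiff] at heq
  have h6 : (Real.sin θ : ℂ) = 0 := by
    have := mul_eq_zero.mp heq
    rcases this with h | h
    · have := mul_eq_zero.mp h
      rcases this with h' | h'
      · norm_num at h'
      · exact h'
    · exact absurd h Complex.I_ne_zero
  have : Real.sin θ = 0 := by exact_mod_cast h6
  linarith
end
end

section
/- Assume the trace class condition ∑_{n≥0}(|a_n - 1/2| + |b_n|) < ∞ and set ρ_n = ∑_{m≥n}(|a_m - 1/2| + |b_m|). Let λ ∈ (-1,1), θ = arccos λ, and let f⁺ = (f⁺_n)_{n≥-1} be a solution of the Jacobi equation at λ such that |f⁺_n e^{inθ} - 1| ≤ C₀ ρ_n for all n ≥ 0 and some constant C₀. Write e^{-iθ} f⁺_{-1} = κ e^{iη} with κ = |e^{-iθ} f⁺_{-1}| > 0 and η ∈ ℝ. Then there is a constant C such that |P_n(λ) - κ (sin θ)^{-1} sin((n+1)θ + η)| ≤ C ρ_n for all n ≥ 0 (the Bernstein–Szegő asymptotics P_n(λ) = κ(θ)(sin θ)^{-1} sin((n+1)θ + η(θ))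 + O(ρ_n)). -/
open Filter Finset MeasureTheory

noncomputable section

lemma aext_natCast_s8 (a : ℕ → ℝ) (n : ℕ) : aext a (n : ℤ) = a n := by simp [aext]

lemma aext_neg_one (a : ℕ → ℝ) : aext a (-1) = 1/2 := by simp [aext]

lemma jacobi_conj (a b : ℕ → ℝ) (lam : ℝ) (u : ℤ → ℂ) (hu : IsJacobiSol a b (lam : ℂ) u) :
    IsJacobiSol a b (lam : ℂ) (fun k => (starRingEnd ℂ) (u k)) := by
  intro n
  have h := congrArg (starRingEnd ℂ) (hu n)
  simpa [map_add, map_mul, Complex.conj_ofReal] using h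

lemma jacobi_comb (a b : ℕ → ℝ) (z : ℂ) (u v : ℤ → ℂ) (hu : IsJacobiSol a b z u)
    (hv : IsJacobiSol a b z v) (c d : ℂ) :
    IsJacobiSol a b z (fun k => c * u k + d * v k) := by
  intro n
  have h1 := hu n
  have h2 := hv n
  simp only []
  linear_combination c * h1 + d * h2

lemma jacobi_smul (a b : ℕ → ℝ) (z : ℂ) (u : ℤ → ℂ) (hu : IsJacobiSol a b z u) (c : ℂ) :
    IsJacobiSol a b z (fun k => c * u k) := by
  intro n
  simp only []
  linear_combination c * hu n

lemma jacobi_unique (a b : ℕ → ℝ) (ha : ∀ n, 0 < a n) (z : ℂ) (u v : ℤ → ℂ)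
    (hu : IsJacobiSol a b z u) (hv : IsJacobiSol a b z v)
    (h1 : u (-1) = v (-1)) (h2 : u 0 = v 0) : ∀ n : ℕ, u (n : ℤ) = v (n : ℤ) := by
  have key : ∀ n : ℕ, u ((n : ℤ) - 1) = v ((n : ℤ) - 1) ∧ u (n : ℤ) = v (n : ℤ) := by
    intro n
    induction n with
    | zero => exact ⟨by simpa using h1, by simpa using h2⟩
    | succ n ih =>
      have hc : ((n + 1 : ℕ) : ℤ) - 1 = (n : ℤ) := by push_cast; ring
      have hc2 : ((n + 1 : ℕ) : ℤ) = (n : ℤ) + 1 := by push_cast; ring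
      refine ⟨by rw [hc]; exact ih.2, ?_⟩
      have hne : (a n : ℂ) ≠ 0 := by exact_mod_cast (ha n).ne'
      have e1 := hu n
      have e2 := hv n
      have hmul : (a n : ℂ) * u ((n : ℤ) + 1) = (a n : ℂ) * v ((n : ℤ) + 1) := by
        linear_combination e1 - e2 - ((aext a ((n : ℤ) - 1) : ℝ) : ℂ) * ih.1
          - ((b n : ℂ) - z) * ih.2
      rw [hc2]
      exact mul_left_cancel₀ hne hmul
  exact fun n => (key n).2

lemma conj_exp_I_nat (m : ℕ) (x : ℝ) :
    (starRingEnd ℂ) (Complex.exp (Complex.I * m * x)) = Complex.exp (-(Complex.I * m * x)) := by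
  rw [← Complex.exp_conj]
  congr 1
  simp [map_mul, Complex.conj_I, Complex.conj_ofReal]

lemma conj_exp_I_real (x : ℝ) :
    (starRingEnd ℂ) (Complex.exp (Complex.I * x)) = Complex.exp (-(Complex.I * x)) := by
  rw [← Complex.exp_conj]
  congr 1
  simp [map_mul, Complex.conj_I, Complex.conj_ofReal]

lemma conj_exp_neg_I_nat (m : ℕ) (x : ℝ) :
    (starRingEnd ℂ) (Complex.exp (-(Complex.I * m * x))) = Complex.exp (Complex.I * m * x) := by
  rw [← Complex.exp_conj]
  congr 1
  simp [map_mul, Complex.conj_I, Complex.conj_ofReal]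

lemma two_I_sin (x : ℝ) :
    Complex.exp (Complex.I * x) - Complex.exp (-(Complex.I * x))
      = 2 * Complex.I * (Real.sin x : ℂ) := by
  rw [show Complex.I * (x:ℂ) = (x:ℂ) * Complex.I from mul_comm _ _]
  rw [show -((x:ℂ) * Complex.I) = (-(x:ℂ)) * Complex.I from by ring]
  rw [Complex.exp_mul_I, Complex.exp_mul_I, Complex.cos_neg, Complex.sin_neg,
    ← Complex.ofReal_sin]
  ring

lemma norm_exp_I_real (x : ℝ) : ‖Complex.exp (Complex.I * x)‖ = 1 := by
  rw [mul_comm]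
  exact Complex.norm_exp_ofReal_mul_I x

lemma norm_exp_neg_I_real (x : ℝ) : ‖Complex.exp (-(Complex.I * x))‖ = 1 := by
  rw [show -(Complex.I * (x:ℂ)) = ((-x : ℝ):ℂ) * Complex.I from by push_cast; ring]
  exact Complex.norm_exp_ofReal_mul_I (-x)

/-- Bernstein–Szegő asymptotics
`P_n(λ) = κ(θ)(sin θ)⁻¹ sin((n+1)θ + η(θ)) + O(ρ_n)` for `λ = cos θ ∈ (-1,1)`. -/
theorem bernstein_szego_asymptotics
    (a b : ℕ → ℝ) (ha : ∀ n, 0 < a n)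
    (htr : Summable (fun n : ℕ => |a n - 1/2| + |b n|))
    (ρ : ℕ → ℝ) (hρ : ∀ n, ρ n = ∑' m : ℕ, (|a (n + m) - 1/2| + |b (n + m)|))
    (lam : ℝ) (hl1 : -1 < lam) (hl2 : lam < 1)
    (θ : ℝ) (hθ : θ = Real.arccos lam)
    (f : ℤ → ℂ) (hf : IsJacobiSol a b (lam : ℂ) f)
    (C₀ : ℝ)
    (hasym : ∀ n : ℕ, ‖f (n : ℤ) * Complex.exp (Complex.I * n * θ) - 1‖ ≤ C₀ * ρ n)
    (κ η : ℝ) (hκ : 0 < κ)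
    (heq : Complex.exp (-Complex.I * θ) * f (-1) = (κ : ℂ) * Complex.exp (Complex.I * η))
    (P : ℤ → ℂ) (hP : IsJacobiSol a b (lam : ℂ) P) (hPm : P (-1) = 0) (hP0 : P 0 = 1) :
    ∃ C : ℝ, ∀ n : ℕ,
      ‖P (n : ℤ) - ((κ / Real.sin θ * Real.sin (((n : ℝ) + 1) * θ + η) : ℝ) : ℂ)‖
        ≤ C * ρ n := by
  -- basic facts on θ
  have hθ1 : 0 < θ := hθ ▸ Real.arccos_pos.mpr hl2
  have hθ2 : θ < Real.pi := by
    rw [hθ]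
    rcases (Real.arccos_le_pi lam).lt_or_eq with h | h
    · exact h
    · exact absurd (Real.arccos_eq_pi.mp h) (by linarith)
  have hs : 0 < Real.sin θ := Real.sin_pos_of_pos_of_lt_pi hθ1 hθ2
  -- facts on ρ
  have hsum : ∀ n : ℕ, Summable (fun m : ℕ => |a (n + m) - 1/2| + |b (n + m)|) := by
    intro n
    exact htr.comp_injective (add_right_injective n)
  have hρnn : ∀ n, 0 ≤ ρ n := by
    intro n
    rw [hρ n]
    exact tsum_nonneg fun m => by positivity
  have hρlim : Tendsto ρ atTop (nhds 0) := by
    have hρeq : ρ = fun i => ∑' k : ℕ, (|a (k + i) - 1/2| + |b (k + i)|) := by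
      funext n
      rw [hρ n]
      exact tsum_congr fun m => by rw [add_comm n m]
    rw [hρeq]
    exact tendsto_sum_nat_add (fun j => |a j - 1/2| + |b j|)
  have hwle : ∀ n, |a n - 1/2| ≤ ρ n := by
    intro n
    rw [hρ n]
    calc |a n - 1/2| ≤ |a (n + 0) - 1/2| + |b (n + 0)| := by
          simp only [Nat.add_zero]; linarith [abs_nonneg (b n)]
      _ ≤ _ := Summable.le_tsum (hsum n) 0 fun j _ => by positivity
  have halim : Tendsto (fun n => a n) atTop (nhds (1/2 : ℝ)) := by
    rw [tendsto_iff_norm_sub_tendsto_zero]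
    exact squeeze_zero (fun n => norm_nonneg _) (fun n => by simpa [Real.norm_eq_abs] using hwle n) hρlim
  -- the normalized sequence u
  set u : ℕ → ℂ := fun n => f (n : ℤ) * Complex.exp (Complex.I * n * θ) with hu_def
  have hulim : Tendsto u atTop (nhds 1) := by
    rw [tendsto_iff_norm_sub_tendsto_zero]
    refine squeeze_zero (fun n => norm_nonneg _) (fun n => hasym n) ?_
    simpa using hρlim.const_mul C₀
  -- Wronskian
  set W : ℕ → ℂ := fun n => ((aext a ((n : ℤ) - 1) : ℝ) : ℂ) *
      (f ((n : ℤ) - 1) * (starRingEnd ℂ) (f (n : ℤ))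
        - f (n : ℤ) * (starRingEnd ℂ) (f ((n : ℤ) - 1))) with hW_def
  have hfc := jacobi_conj a b lam f hf
  have hWc : ∀ n : ℕ, W (n + 1) = W n := by
    intro n
    have e1 := hf n
    have e2 := hfc n
    simp only [] at e2
    simp only [hW_def]
    have hc : ((n + 1 : ℕ) : ℤ) - 1 = (n : ℤ) := by push_cast; ring
    have hc2 : ((n + 1 : ℕ) : ℤ) = (n : ℤ) + 1 := by push_cast; ring
    rw [hc, hc2, aext_natCast_s8]
    linear_combination f (n : ℤ) * e2 - (starRingEnd ℂ) (f (n : ℤ)) * e1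
  have hWconst : ∀ n : ℕ, W n = W 0 := by
    intro n
    induction n with
    | zero => rfl
    | succ n ih => rw [hWc n, ih]
  -- identify W (n+1) in terms of u
  have key : ∀ n : ℕ, W (n + 1) = ((a n : ℝ) : ℂ) *
      ((u n * (starRingEnd ℂ) (u (n + 1))) * Complex.exp (Complex.I * θ)
        - (u (n + 1) * (starRingEnd ℂ) (u n)) * Complex.exp (-(Complex.I * θ))) := by
    intro n
    have hc : ((n + 1 : ℕ) : ℤ) - 1 = (n : ℤ) := by push_cast; ring
    have hc2 : ((n + 1 : ℕ) : ℤ) = (n : ℤ) + 1 := by push_cast; ring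
    simp only [hW_def, hu_def]
    rw [hc, hc2, aext_natCast_s8]
    rw [map_mul, map_mul, conj_exp_I_nat, conj_exp_I_nat]
    have E1 : Complex.exp (Complex.I * n * θ) * Complex.exp (-(Complex.I * (n + 1 : ℕ) * θ))
        * Complex.exp (Complex.I * θ) = 1 := by
      rw [← Complex.exp_add, ← Complex.exp_add, ← Complex.exp_zero]
      congr 1
      push_cast
      ring
    have E2 : Complex.exp (Complex.I * (n + 1 : ℕ) * θ) * Complex.exp (-(Complex.I * n * θ))
        * Complex.exp (-(Complex.I * θ)) = 1 := by
      rw [← Complex.exp_add, ← Complex.exp_add, ← Complex.exp_zero]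
      congr 1
      push_cast
      ring
    linear_combination (-((a n : ℝ) : ℂ) * f (n : ℤ) * (starRingEnd ℂ) (f ((n : ℤ) + 1))) * E1
      + (((a n : ℝ) : ℂ) * f ((n : ℤ) + 1) * (starRingEnd ℂ) (f (n : ℤ))) * E2
  -- limit of the Wronskian
  have hulim2 : Tendsto (fun n => u (n + 1)) atTop (nhds 1) :=
    hulim.comp (tendsto_add_atTop_nat 1)
  have hconj_cont : Continuous (starRingEnd ℂ) := Complex.continuous_conj
  have hWlim : Tendsto (fun n => W (n + 1)) atTop (nhds (((1/2 : ℝ) : ℂ) *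
      ((1 * (starRingEnd ℂ) 1) * Complex.exp (Complex.I * θ)
        - (1 * (starRingEnd ℂ) 1) * Complex.exp (-(Complex.I * θ))))) := by
    simp only [key]
    have t0 : Tendsto (fun n => ((a n : ℝ) : ℂ)) atTop (nhds ((1/2 : ℝ) : ℂ)) :=
      (Complex.continuous_ofReal.tendsto _).comp halim
    have t1 : Tendsto (fun n => (starRingEnd ℂ) (u n)) atTop (nhds ((starRingEnd ℂ) 1)) :=
      (hconj_cont.tendsto _).comp hulim
    have t2 : Tendsto (fun n => (starRingEnd ℂ) (u (n + 1))) atTop (nhds ((starRingEnd ℂ) 1)) :=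
      (hconj_cont.tendsto _).comp hulim2
    exact t0.mul (((hulim.mul t2).mul tendsto_const_nhds).sub
      ((hulim2.mul t1).mul tendsto_const_nhds))
  -- value of the Wronskian
  have hW0 : W 0 = Complex.I * (Real.sin θ : ℂ) := by
    have hconstlim : Tendsto (fun n : ℕ => W (n + 1)) atTop (nhds (W 0)) := by
      have hce : (fun n : ℕ => W (n + 1)) = fun _ => W 0 := funext fun n => hWconst (n + 1)
      rw [hce]
      exact tendsto_const_nhds
    have hval := tendsto_nhds_unique hconstlim hWlim
    rw [hval, map_one, show ((1/2 : ℝ) : ℂ) = (1/2 : ℂ) from by norm_num]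
    linear_combination (1/2 : ℂ) * (two_I_sin θ)
  -- the solution g
  set g : ℤ → ℂ := fun k => (starRingEnd ℂ) (f (-1)) * f k
      + (-(f (-1))) * (starRingEnd ℂ) (f k) with hg_def
  have hgsol : IsJacobiSol a b (lam : ℂ) g :=
    jacobi_comb a b (lam : ℂ) f (fun k => (starRingEnd ℂ) (f k)) hf hfc _ _
  have hgm : g (-1) = 0 := by simp only [hg_def]; ring
  -- W 0 in explicit form
  have hW0' : (1/2 : ℂ) * (f (-1) * (starRingEnd ℂ) (f 0)
      - f 0 * (starRingEnd ℂ) (f (-1))) = Complex.I * (Real.sin θ : ℂ) := by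
    have h := hW0
    simp only [hW_def] at h
    norm_num [aext_neg_one] at h
    convert h using 2 <;> norm_num
  have hg0 : g 0 = -2 * Complex.I * (Real.sin θ : ℂ) := by
    simp only [hg_def]
    linear_combination (-2 : ℂ) * hW0'
  have hg0ne : g 0 ≠ 0 := by
    rw [hg0]
    exact mul_ne_zero (mul_ne_zero (by norm_num) Complex.I_ne_zero)
      (Complex.ofReal_ne_zero.mpr hs.ne')
  -- P in terms of g
  have hPg : ∀ n : ℕ, g 0 * P (n : ℤ) = g (n : ℤ) := by
    have hscaled : IsJacobiSol a b (lam : ℂ) (fun k => g 0 * P k) :=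
      jacobi_smul a b (lam : ℂ) P hP (g 0)
    exact jacobi_unique a b ha (lam : ℂ) (fun k => g 0 * P k) g hscaled hgsol
      (by simp [hPm, hgm]) (by simp [hP0])
  -- value of f (-1)
  have heq' : Complex.exp (-(Complex.I * θ)) * f (-1) = (κ : ℂ) * Complex.exp (Complex.I * η) := by
    rw [show -(Complex.I * (θ : ℂ)) = -Complex.I * θ from by ring]
    exact heq
  have hexp1 : Complex.exp (Complex.I * θ) * Complex.exp (-(Complex.I * θ)) = 1 := by
    rw [← Complex.exp_add, ← Complex.exp_zero]
    congr 1
    ring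
  have hf1 : f (-1) = Complex.exp (Complex.I * θ) * ((κ : ℂ) * Complex.exp (Complex.I * η)) := by
    linear_combination Complex.exp (Complex.I * (θ : ℂ)) * heq' - f (-1) * hexp1
  have hcf1 : (starRingEnd ℂ) (f (-1))
      = Complex.exp (-(Complex.I * θ)) * ((κ : ℂ) * Complex.exp (-(Complex.I * η))) := by
    rw [hf1, map_mul, map_mul, conj_exp_I_real, conj_exp_I_real, Complex.conj_ofReal]
  -- final estimate
  refine ⟨κ * C₀ / Real.sin θ, fun n => ?_⟩
  set φ : ℝ := ((n : ℝ) + 1) * θ + η with hφ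
  set T : ℂ := ((κ / Real.sin θ * Real.sin φ : ℝ) : ℂ) with hT
  have hexpn : Complex.exp (Complex.I * (n : ℕ) * θ) * Complex.exp (-(Complex.I * (n : ℕ) * θ)) = 1 := by
    rw [← Complex.exp_add, ← Complex.exp_zero]
    congr 1
    ring
  have hfn : f (n : ℤ) = u n * Complex.exp (-(Complex.I * (n : ℕ) * θ)) := by
    simp only [hu_def]
    linear_combination (-(f (n : ℤ))) * hexpn
  have hcfn : (starRingEnd ℂ) (f (n : ℤ))
      = (starRingEnd ℂ) (u n) * Complex.exp (Complex.I * (n : ℕ) * θ) := by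
    rw [hfn, map_mul, conj_exp_neg_I_nat]
  have hE1 : Complex.exp (-(Complex.I * θ)) * Complex.exp (-(Complex.I * η))
      * Complex.exp (-(Complex.I * (n : ℕ) * θ)) = Complex.exp (-(Complex.I * (φ : ℝ))) := by
    rw [← Complex.exp_add, ← Complex.exp_add]
    congr 1
    rw [hφ]
    push_cast
    ring
  have hE2 : Complex.exp (Complex.I * θ) * Complex.exp (Complex.I * η)
      * Complex.exp (Complex.I * (n : ℕ) * θ) = Complex.exp (Complex.I * (φ : ℝ)) := by
    rw [← Complex.exp_add, ← Complex.exp_add]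
    congr 1
    rw [hφ]
    push_cast
    ring
  have hsinφ := two_I_sin φ
  have hgn : g (n : ℤ) + 2 * Complex.I * (κ : ℂ) * (Real.sin φ : ℂ)
      = (κ : ℂ) * Complex.exp (-(Complex.I * (φ : ℝ))) * (u n - 1)
        - (κ : ℂ) * Complex.exp (Complex.I * (φ : ℝ)) * ((starRingEnd ℂ) (u n) - 1) := by
    simp only [hg_def]
    rw [hcf1, hcfn, hf1, hfn]
    linear_combination (κ : ℂ) * (u n) * hE1 - (κ : ℂ) * ((starRingEnd ℂ) (u n)) * hE2
      - (κ : ℂ) * hsinφ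
  have hD : g 0 * (P (n : ℤ) - T) = g (n : ℤ) + 2 * Complex.I * (κ : ℂ) * (Real.sin φ : ℂ) := by
    rw [mul_sub, hPg n, hg0, hT, Complex.ofReal_mul, Complex.ofReal_div]
    have hsne : ((Real.sin θ : ℝ) : ℂ) ≠ 0 := Complex.ofReal_ne_zero.mpr hs.ne'
    have hsne2 : Complex.sin (θ : ℂ) ≠ 0 := by rw [← Complex.ofReal_sin]; exact hsne
    field_simp [hsne2]
    ring
  have hgnorm : ‖g 0‖ = 2 * Real.sin θ := by
    rw [hg0]
    rw [show (-2 * Complex.I * ((Real.sin θ : ℝ) : ℂ)) = ((-2 : ℝ) : ℂ) * Complex.I * ((Real.sin θ : ℝ) : ℂ)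
      from by push_cast; ring]
    rw [norm_mul, norm_mul, Complex.norm_real, Complex.norm_real, Complex.norm_I]
    rw [Real.norm_eq_abs, Real.norm_eq_abs, abs_of_pos hs]
    norm_num
  have hPT : ‖P (n : ℤ) - T‖
      = ‖g (n : ℤ) + 2 * Complex.I * (κ : ℂ) * (Real.sin φ : ℂ)‖ / (2 * Real.sin θ) := by
    have h := congrArg norm hD
    rw [norm_mul, hgnorm] at h
    field_simp at h ⊢
    linarith [h]
  have hDnorm : ‖g (n : ℤ) + 2 * Complex.I * (κ : ℂ) * (Real.sin φ : ℂ)‖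
      ≤ 2 * κ * (C₀ * ρ n) := by
    rw [hgn]
    have h1 : ‖(κ : ℂ) * Complex.exp (-(Complex.I * (φ : ℝ))) * (u n - 1)‖ ≤ κ * (C₀ * ρ n) := by
      rw [norm_mul, norm_mul, Complex.norm_real, norm_exp_neg_I_real,
        Real.norm_eq_abs, abs_of_pos hκ, mul_one]
      exact mul_le_mul_of_nonneg_left (hasym n) hκ.le
    have h2 : ‖(κ : ℂ) * Complex.exp (Complex.I * (φ : ℝ)) * ((starRingEnd ℂ) (u n) - 1)‖
        ≤ κ * (C₀ * ρ n) := by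
      rw [norm_mul, norm_mul, Complex.norm_real, norm_exp_I_real,
        Real.norm_eq_abs, abs_of_pos hκ, mul_one]
      have : ‖(starRingEnd ℂ) (u n) - 1‖ = ‖u n - 1‖ := by
        rw [show (starRingEnd ℂ) (u n) - 1 = (starRingEnd ℂ) (u n - 1) from by
          rw [map_sub, map_one]]
        exact RCLike.norm_conj _
      rw [this]
      exact mul_le_mul_of_nonneg_left (hasym n) hκ.le
    calc ‖_ - _‖ ≤ _ + _ := norm_sub_le _ _
      _ ≤ κ * (C₀ * ρ n) + κ * (C₀ * ρ n) := add_le_add h1 h2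
      _ = 2 * κ * (C₀ * ρ n) := by ring
  rw [hPT]
  rw [div_le_iff₀ (by linarith : (0:ℝ) < 2 * Real.sin θ)]
  calc ‖g (n : ℤ) + 2 * Complex.I * (κ : ℂ) * (Real.sin φ : ℂ)‖ ≤ 2 * κ * (C₀ * ρ n) := hDnorm
    _ = κ * C₀ / Real.sin θ * ρ n * (2 * Real.sin θ) := by field_simp
end
end

section
/- Assume the trace class condition ∑_{n≥0}(|a_n - 1/2| + |b_n|) < ∞. Let ζ ∈ ℂ with 0 < |ζ| < 1, set z = (ζ + ζ⁻¹)/2 and √(z² - 1) := (ζ⁻¹ - ζ)/2. Let f = (f_n)_{n≥-1} be a solution of the Jacobi equation at z with f_n ζ^{-n} → 1, and suppose f_n ≠ 0 for all n ≥ n₀ - 1 for some n₀ ≥ 0. Define Θ_n = ∑_{m=n₀}^{n} (a_{m-1} f_{m-1} f_m)^{-1} and g_n = f_n Θ_n for n ≥ n₀ - 1. Then: (i) a_{n-1} g_{n-1} + b_n g_n + a_n g_{n+1} = z g_n for all n ≥ n₀; (ii) a_n (f_n g_{n+1} - f_{n+1} g_n) = 1 for all n ≥ n₀ - 1; (iii)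 ζ^n g_n → 1/√(z² - 1) as n → ∞. -/
open Filter Finset MeasureTheory

noncomputable section

/-- construction of the exponentially growing solution
`g_n = f_n Θ_n`, its Wronskian with `f` and its asymptotics. -/
theorem growing_solution
    (a b : ℕ → ℝ) (ha : ∀ n, 0 < a n)
    (htr : Summable (fun n : ℕ => |a n - 1/2| + |b n|))
    (ζ : ℂ) (hζ0 : 0 < ‖ζ‖) (hζ1 : ‖ζ‖ < 1)
    (z sq : ℂ) (hz : z = (ζ + ζ⁻¹) / 2) (hsq : sq = (ζ⁻¹ - ζ) / 2)
    (f : ℤ → ℂ) (hf : IsJacobiSol a b z f)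
    (hasym : Filter.Tendsto (fun n : ℕ => f (n : ℤ) * ζ ^ (-(n : ℤ))) Filter.atTop (nhds 1))
    (n₀ : ℕ) (hfne : ∀ n : ℤ, (n₀ : ℤ) - 1 ≤ n → f n ≠ 0)
    (g : ℤ → ℂ)
    (hg : ∀ n : ℤ, (n₀ : ℤ) - 1 ≤ n →
      g n = f n * ∑ m ∈ Finset.Icc (n₀ : ℤ) n, ((aext a (m - 1) : ℂ) * f (m - 1) * f m)⁻¹) :
    (∀ n : ℕ, n₀ ≤ n →
        (aext a ((n : ℤ) - 1) : ℂ) * g ((n : ℤ) - 1) + (b n : ℂ) * g (n : ℤ)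
          + (a n : ℂ) * g ((n : ℤ) + 1) = z * g (n : ℤ)) ∧
    (∀ n : ℤ, (n₀ : ℤ) - 1 ≤ n →
        (aext a n : ℂ) * (f n * g (n + 1) - f (n + 1) * g n) = 1) ∧
    Filter.Tendsto (fun n : ℕ => ζ ^ (n : ℕ) * g (n : ℤ)) Filter.atTop (nhds (1 / sq)) := by
  have hζ : ζ ≠ 0 := by
    intro h; rw [h, norm_zero] at hζ0; exact lt_irrefl 0 hζ0
  let T : ℤ → ℂ := fun m => ((aext a (m - 1) : ℂ) * f (m - 1) * f m)⁻¹
  let Θ : ℤ → ℂ := fun n => ∑ m ∈ Finset.Icc (n₀ : ℤ) n, T m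
  have hgΘ : ∀ n : ℤ, (n₀ : ℤ) - 1 ≤ n → g n = f n * Θ n := hg
  have haext_pos : ∀ k : ℤ, 0 < aext a k := by
    intro k; unfold aext; split
    · norm_num
    · exact ha _
  have haextne : ∀ k : ℤ, (aext a k : ℂ) ≠ 0 := by
    intro k
    exact_mod_cast (haext_pos k).ne'
  have hΘsucc : ∀ n : ℤ, (n₀ : ℤ) - 1 ≤ n → Θ (n + 1) = Θ n + T (n + 1) := by
    intro n hn
    have hins : Finset.Icc (n₀ : ℤ) (n + 1) = insert (n + 1) (Finset.Icc (n₀ : ℤ) n) := by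
      ext m; simp only [Finset.mem_Icc, Finset.mem_insert]; omega
    show ∑ m ∈ Finset.Icc (n₀ : ℤ) (n+1), T m = _
    rw [hins, Finset.sum_insert (by simp only [Finset.mem_Icc]; omega)]
    ring
  -- Part (ii)
  have part2 : ∀ n : ℤ, (n₀ : ℤ) - 1 ≤ n →
      (aext a n : ℂ) * (f n * g (n + 1) - f (n + 1) * g n) = 1 := by
    intro n hn
    have hfn := hfne n hn
    have hfn1 := hfne (n + 1) (by omega)
    have hA := haextne n
    rw [hgΘ n hn, hgΘ (n + 1) (by omega), hΘsucc n hn]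
    have hTn : T (n + 1) = ((aext a n : ℂ) * f n * f (n + 1))⁻¹ := by
      show ((aext a (n + 1 - 1) : ℂ) * f (n + 1 - 1) * f (n + 1))⁻¹ = _
      norm_num
    rw [hTn]
    field_simp
    ring
  -- Part (i)
  have part1 : ∀ n : ℕ, n₀ ≤ n →
      (aext a ((n : ℤ) - 1) : ℂ) * g ((n : ℤ) - 1) + (b n : ℂ) * g (n : ℤ)
        + (a n : ℂ) * g ((n : ℤ) + 1) = z * g (n : ℤ) := by
    intro n hn
    have hn' : (n₀ : ℤ) ≤ (n : ℤ) := by exact_mod_cast hn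
    have hfm := hfne ((n : ℤ) - 1) (by omega)
    have hf0 := hfne (n : ℤ) (by omega)
    have hf1 := hfne ((n : ℤ) + 1) (by omega)
    have hAm := haextne ((n : ℤ) - 1)
    have hAn : (a n : ℂ) ≠ 0 := by exact_mod_cast (ha n).ne'
    have hr2 := hΘsucc (n : ℤ) (by omega)
    have hr1 : Θ ((n : ℤ) - 1) = Θ (n : ℤ) - T (n : ℤ) := by
      have h := hΘsucc ((n : ℤ) - 1) (by omega)
      rw [show (n : ℤ) - 1 + 1 = (n : ℤ) by ring] at h
      rw [h]; ring
    have e1 : (aext a ((n : ℤ) - 1) : ℂ) * f ((n : ℤ) - 1) * T (n : ℤ) = (f (n : ℤ))⁻¹ := by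
      show (aext a ((n : ℤ) - 1) : ℂ) * f ((n : ℤ) - 1)
          * ((aext a ((n : ℤ) - 1) : ℂ) * f ((n : ℤ) - 1) * f (n : ℤ))⁻¹ = (f (n : ℤ))⁻¹
      field_simp
    have e2 : (a n : ℂ) * f ((n : ℤ) + 1) * T ((n : ℤ) + 1) = (f (n : ℤ))⁻¹ := by
      have hTe : T ((n : ℤ) + 1) = ((a n : ℂ) * f (n : ℤ) * f ((n : ℤ) + 1))⁻¹ := by
        show ((aext a ((n : ℤ) + 1 - 1) : ℂ) * f ((n : ℤ) + 1 - 1) * f ((n : ℤ) + 1))⁻¹ = _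
        rw [show (n : ℤ) + 1 - 1 = (n : ℤ) by ring,
          show aext a (n : ℤ) = a n by simp [aext]]
      rw [hTe]
      field_simp
    rw [hgΘ ((n : ℤ) - 1) (by omega), hgΘ (n : ℤ) (by omega), hgΘ ((n : ℤ) + 1) (by omega),
      hr1, hr2]
    linear_combination Θ (n : ℤ) * hf n - e1 + e2
  refine ⟨part1, part2, ?_⟩
  -- Part (iii)
  -- Part (iii)
  have h0 : Tendsto (fun n : ℕ => |a n - 1/2| + |b n|) atTop (nhds 0) := htr.tendsto_atTop_zero
  have ha2 : Tendsto (fun n : ℕ => a n) atTop (nhds (1/2 : ℝ)) := by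
    rw [tendsto_iff_norm_sub_tendsto_zero]
    refine squeeze_zero (fun n => norm_nonneg _) (fun n => ?_) h0
    rw [Real.norm_eq_abs]
    exact le_add_of_nonneg_right (abs_nonneg _)
  let c : ℕ → ℂ := fun m =>
    ((aext a ((m : ℤ) - 1) : ℂ) * (f ((m : ℤ) - 1) * ζ ^ (1 - (m : ℤ)))
      * (f (m : ℤ) * ζ ^ (-(m : ℤ))))⁻¹
  have hAc : Tendsto (fun m : ℕ => ((aext a ((m : ℤ) - 1) : ℝ) : ℂ)) atTop
      (nhds ((1:ℂ)/2)) := by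
    have h1 : Tendsto (fun m : ℕ => a (m - 1)) atTop (nhds (1/2 : ℝ)) :=
      ha2.comp (tendsto_sub_atTop_nat 1)
    have h2 : Tendsto (fun m : ℕ => ((a (m - 1) : ℝ) : ℂ)) atTop (nhds ((1:ℂ)/2)) := by
      have := (Complex.continuous_ofReal.tendsto _).comp h1
      simpa [Function.comp_def] using this
    refine h2.congr' ?_
    filter_upwards [eventually_ge_atTop 1] with m hm
    simp only [aext]
    rw [if_neg (by omega)]
    congr 2
    omega
  have hfm1 : Tendsto (fun m : ℕ => f ((m : ℤ) - 1) * ζ ^ (1 - (m : ℤ))) atTop (nhds 1) := by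
    have h1 := hasym.comp (tendsto_sub_atTop_nat 1)
    refine h1.congr' ?_
    filter_upwards [eventually_ge_atTop 1] with m hm
    simp only [Function.comp]
    rw [show ((m - 1 : ℕ) : ℤ) = (m : ℤ) - 1 by omega,
      show (1 : ℤ) - (m : ℤ) = -((m : ℤ) - 1) by ring]
  have hprod : Tendsto (fun m : ℕ => (aext a ((m : ℤ) - 1) : ℂ)
      * (f ((m : ℤ) - 1) * ζ ^ (1 - (m : ℤ))) * (f (m : ℤ) * ζ ^ (-(m : ℤ)))) atTop
      (nhds ((1:ℂ)/2)) := by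
    have := (hAc.mul hfm1).mul hasym
    simpa using this
  have hc : Tendsto c atTop (nhds 2) := by
    have h2 := hprod.inv₀ (by norm_num)
    have h3 : ((1:ℂ)/2)⁻¹ = 2 := by norm_num
    rw [h3] at h2
    exact h2
  obtain ⟨M, hM⟩ := hc.norm.bddAbove_range
  have hMc : ∀ m, ‖c m‖ ≤ M := fun m => hM (Set.mem_range_self m)
  have hM0 : (0:ℝ) ≤ M := le_trans (norm_nonneg (c 0)) (hMc 0)
  have key : ∀ m : ℕ, T (m : ℤ) = c m * ζ ^ (1 - 2 * (m : ℤ)) := by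
    intro m
    have hzp : ζ ^ (1 - (m : ℤ)) * ζ ^ (-(m : ℤ)) = ζ ^ (1 - 2 * (m : ℤ)) := by
      rw [← zpow_add₀ hζ]; congr 1; ring
    have hzne : ζ ^ (1 - 2 * (m : ℤ)) ≠ 0 := zpow_ne_zero _ hζ
    have h2 : c m = (((aext a ((m : ℤ) - 1) : ℂ) * f ((m : ℤ) - 1) * f (m : ℤ))
        * ζ ^ (1 - 2 * (m : ℤ)))⁻¹ := by
      show (_ : ℂ)⁻¹ = _
      congr 1
      rw [← hzp]; ring
    have h4 : (((aext a ((m : ℤ) - 1) : ℂ) * f ((m : ℤ) - 1) * f (m : ℤ))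
        * ζ ^ (1 - 2 * (m : ℤ)))⁻¹ * ζ ^ (1 - 2 * (m : ℤ))
        = ((aext a ((m : ℤ) - 1) : ℂ) * f ((m : ℤ) - 1) * f (m : ℤ))⁻¹ := by
      rcases eq_or_ne ((aext a ((m : ℤ) - 1) : ℂ) * f ((m : ℤ) - 1) * f (m : ℤ)) 0 with h | h
      · rw [h]; simp
      · field_simp
    show ((aext a ((m : ℤ) - 1) : ℂ) * f ((m : ℤ) - 1) * f (m : ℤ))⁻¹ = _
    rw [h2, h4]
  have hΘsum : ∀ n : ℕ, Θ ((n + n₀ : ℕ) : ℤ) = ∑ k ∈ Finset.range (n+1), T ((k + n₀ : ℕ) : ℤ) := by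
    intro n
    induction n with
    | zero =>
      show ∑ m ∈ Finset.Icc (n₀ : ℤ) ((0 + n₀ : ℕ) : ℤ), T m = _
      rw [show ((0 + n₀ : ℕ) : ℤ) = (n₀ : ℤ) by push_cast; ring]
      rw [Finset.Icc_self, Finset.sum_singleton, Finset.sum_range_one]
      norm_num
    | succ n ih =>
      have hcast : ((n + 1 + n₀ : ℕ) : ℤ) = ((n + n₀ : ℕ) : ℤ) + 1 := by push_cast; ring
      rw [hcast, hΘsucc _ (by push_cast; omega), ih,
        Finset.sum_range_succ (fun k => T ((k + n₀ : ℕ) : ℤ)) (n+1)]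
      congr 1
      congr 1
      push_cast; ring
  let F : ℕ → ℕ → ℂ := fun n k => if k ≤ n then c (n - k + n₀) * ζ ^ (2 * k + 1) else 0
  have hAeq : ∀ n : ℕ, (∑' k, F n k) = ζ ^ (2 * (n + n₀) : ℕ) * Θ ((n + n₀ : ℕ) : ℤ) := by
    intro n
    rw [tsum_eq_sum (s := Finset.range (n+1))
      (by intro k hk; simp only [Finset.mem_range] at hk; simp only [F]; rw [if_neg (by omega)])]
    rw [hΘsum n, Finset.mul_sum,
      ← Finset.sum_range_reflect (fun k => ζ ^ (2 * (n + n₀) : ℕ) * T ((k + n₀ : ℕ) : ℤ)) (n+1)]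
    refine Finset.sum_congr rfl ?_
    intro k hk
    simp only [Finset.mem_range, Nat.lt_succ_iff] at hk
    simp only [F, if_pos hk, Nat.add_sub_cancel]
    rw [key (n - k + n₀)]
    rw [← zpow_natCast ζ (2 * k + 1), ← zpow_natCast ζ (2 * (n + n₀))]
    rw [mul_comm (ζ ^ ((2 * (n + n₀) : ℕ) : ℤ)) _, mul_assoc, ← zpow_add₀ hζ]
    congr 1
    congr 1
    omega
  have hsummable : Summable (fun k : ℕ => M * ‖ζ‖ * (‖ζ‖^2)^k) :=
    (summable_geometric_of_lt_one (by positivity) (by nlinarith)).mul_left _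
  have hpoint : ∀ k : ℕ, Tendsto (fun n => F n k) atTop (nhds (2 * ζ ^ (2 * k + 1))) := by
    intro k
    have hsh : Tendsto (fun n : ℕ => n - k + n₀) atTop atTop := by
      refine tendsto_atTop_atTop.mpr fun b => ⟨b + k, fun n hn => by omega⟩
    have h1 : Tendsto (fun n : ℕ => c (n - k + n₀) * ζ ^ (2 * k + 1)) atTop
        (nhds (2 * ζ ^ (2 * k + 1))) := (hc.comp hsh).mul_const _
    refine h1.congr' ?_
    filter_upwards [eventually_ge_atTop k] with n hn
    simp only [F, if_pos hn]
  have hbound : ∀ᶠ n in atTop, ∀ k, ‖F n k‖ ≤ M * ‖ζ‖ * (‖ζ‖^2)^k := by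
    refine Eventually.of_forall fun n k => ?_
    have h3 : (0:ℝ) ≤ ‖ζ‖ * (‖ζ‖^2)^k := by positivity
    simp only [F]
    split
    · rw [norm_mul, norm_pow]
      have he : ‖ζ‖ ^ (2 * k + 1) = ‖ζ‖ * (‖ζ‖^2)^k := by
        rw [pow_add, pow_mul, pow_one]; ring
      rw [he, ← mul_assoc]
      calc ‖c (n - k + n₀)‖ * ‖ζ‖ * (‖ζ‖^2)^k ≤ M * ‖ζ‖ * (‖ζ‖^2)^k := by
            apply mul_le_mul_of_nonneg_right (mul_le_mul_of_nonneg_right (hMc _) (norm_nonneg _))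
            positivity
        _ = M * ‖ζ‖ * (‖ζ‖^2)^k := rfl
    · rw [norm_zero]
      positivity
  have hlimF : Tendsto (fun n => ∑' k, F n k) atTop (nhds (∑' k, 2 * ζ ^ (2 * k + 1))) :=
    tendsto_tsum_of_dominated_convergence hsummable hpoint hbound
  have hne : (1 : ℂ) - ζ^2 ≠ 0 := by
    intro h
    have h2 : ζ ^ 2 = 1 := by linear_combination -h
    have : ‖ζ^2‖ = 1 := by rw [h2]; simp
    rw [norm_pow] at this
    nlinarith
  have htsum : (∑' k : ℕ, 2 * ζ ^ (2 * k + 1)) = 1 / sq := by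
    have h1 : ∀ k : ℕ, 2 * ζ ^ (2 * k + 1) = (2 * ζ) * (ζ^2)^k := by
      intro k; rw [pow_add, pow_mul, pow_one]; ring
    simp only [h1]
    rw [tsum_mul_left, tsum_geometric_of_norm_lt_one (by rw [norm_pow]; nlinarith), hsq]
    have hd : ζ⁻¹ - ζ = (1 - ζ^2) / ζ := by field_simp
    rw [hd]
    field_simp
  have hg2 : ∀ n : ℕ, ζ ^ (n + n₀ : ℕ) * g ((n + n₀ : ℕ) : ℤ)
      = (f ((n + n₀ : ℕ) : ℤ) * ζ ^ (-((n + n₀ : ℕ) : ℤ))) * (∑' k, F n k) := by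
    intro n
    rw [hAeq n, hgΘ ((n + n₀ : ℕ) : ℤ) (by push_cast; omega)]
    have hp : ζ ^ (n + n₀ : ℕ) = ζ ^ (-((n + n₀ : ℕ) : ℤ)) * ζ ^ ((2 * (n + n₀) : ℕ)) := by
      rw [← zpow_natCast ζ (n + n₀), ← zpow_natCast ζ (2 * (n + n₀)), ← zpow_add₀ hζ]
      congr 1; push_cast; ring
    rw [hp]; ring
  have hfshift : Tendsto (fun n : ℕ => f ((n + n₀ : ℕ) : ℤ) * ζ ^ (-((n + n₀ : ℕ) : ℤ)))
      atTop (nhds 1) := hasym.comp (tendsto_add_atTop_nat n₀)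
  have hfinal : Tendsto (fun n : ℕ => ζ ^ (n + n₀ : ℕ) * g ((n + n₀ : ℕ) : ℤ)) atTop
      (nhds (1/sq)) := by
    have h := hfshift.mul hlimF
    rw [one_mul, htsum] at h
    exact Tendsto.congr (fun n => (hg2 n).symm) h
  exact (tendsto_add_atTop_iff_nat n₀).mp hfinal
end
end

section
/- Assume the trace class condition ∑_{n≥0}(|a_n - 1/2| + |b_n|) < ∞. Let ζ ∈ ℂ with 0 < |ζ| < 1, set z = (ζ + ζ⁻¹)/2, and let f = (f_n)_{n≥-1} be a solution of the Jacobi equation at z with f_n ζ^{-n} → 1. Define the Jost function Ω(z) = ζ f_{-1}. Then lim_{n→∞} ζⁿ P_n(z) = Ω(z) / (1 - ζ²). -/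
open Filter Finset MeasureTheory

noncomputable section

lemma conv_lemma (w : ℂ) (hw : ‖w‖ < 1) (v : ℕ → ℂ) (L : ℂ)
    (hv : Tendsto v atTop (nhds L)) :
    Tendsto (fun m => ∑ j ∈ range m, w ^ (m - j) * v j) atTop
      (nhds (w * (1 - w)⁻¹ * L)) := by
  obtain ⟨C, hC⟩ : ∃ C, ∀ j, ‖v j‖ ≤ C := by
    obtain ⟨C, hC⟩ := (hv.norm.bddAbove_range)
    exact ⟨C, fun j => hC ⟨j, rfl⟩⟩
  have hC0 : 0 ≤ C := le_trans (norm_nonneg _) (hC 0)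
  set F : ℕ → ℕ → ℂ := fun m i => if i < m then w ^ (i + 1) * v (m - 1 - i) else 0 with hF
  have hsum_eq : ∀ m, ∑ j ∈ range m, w ^ (m - j) * v j = ∑' i, F m i := by
    intro m
    rw [← Finset.sum_range_reflect]
    have h1 : ∑ i ∈ range m, w ^ (m - (m - 1 - i)) * v (m - 1 - i) = ∑ i ∈ range m, F m i := by
      refine Finset.sum_congr rfl fun i hi => ?_
      simp only [Finset.mem_range] at hi
      simp only [hF]
      rw [if_pos hi]
      congr 2
      omega
    exact h1.trans (tsum_eq_sum (s := range m) (f := F m)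
      (fun i hi => by simp only [hF]; rw [if_neg (by simpa using hi)])).symm
  have hpt : ∀ i, Tendsto (fun m => F m i) atTop (nhds (w ^ (i + 1) * L)) := by
    intro i
    have h1 : Tendsto (fun m => v (m - 1 - i)) atTop (nhds L) := by
      have : Tendsto (fun m : ℕ => m - 1 - i) atTop atTop :=
        (tendsto_sub_atTop_nat i).comp (tendsto_sub_atTop_nat 1)
      exact hv.comp this
    refine Tendsto.congr' ?_ (h1.const_mul (w ^ (i + 1)))
    filter_upwards [eventually_ge_atTop (i + 1)] with m hm
    simp only [hF]
    rw [if_pos (by omega)]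
  have hbd : ∀ᶠ m in atTop, ∀ i, ‖F m i‖ ≤ ‖w‖ ^ (i + 1) * C := by
    refine Eventually.of_forall fun m i => ?_
    simp only [hF]
    by_cases hi : i < m
    · rw [if_pos hi, norm_mul, norm_pow]
      exact mul_le_mul_of_nonneg_left (hC _) (by positivity)
    · rw [if_neg hi, norm_zero]; positivity
  have hsummable : Summable (fun i : ℕ => ‖w‖ ^ (i + 1) * C) := by
    have := (summable_geometric_of_lt_one (norm_nonneg w) hw).mul_left ‖w‖
    simpa [pow_succ'] using this.mul_right C
  have hmain := tendsto_tsum_of_dominated_convergence hsummable hpt hbd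
  have heq : (∑' i : ℕ, w ^ (i + 1) * L) = w * (1 - w)⁻¹ * L := by
    rw [tsum_mul_right]
    congr 1
    have : (fun i : ℕ => w ^ (i + 1)) = fun i : ℕ => w * w ^ i := by
      ext i; rw [pow_succ']
    rw [this, tsum_mul_left, tsum_geometric_of_norm_lt_one hw]
  rw [heq] at hmain
  exact Tendsto.congr (fun m => (hsum_eq m).symm) hmain


/-- `lim ζⁿ P_n(z) = Ω(z)/(1 - ζ²)` for `z` outside `[-1,1]`, where
`Ω(z) = ζ f_{-1}(z)` is the Jost function. -/
theorem szego_asymptotics_outside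
    (a b : ℕ → ℝ) (ha : ∀ n, 0 < a n)
    (htr : Summable (fun n : ℕ => |a n - 1/2| + |b n|))
    (ζ : ℂ) (hζ0 : 0 < ‖ζ‖) (hζ1 : ‖ζ‖ < 1)
    (z : ℂ) (hz : z = (ζ + ζ⁻¹) / 2)
    (f : ℤ → ℂ) (hf : IsJacobiSol a b z f)
    (hasym : Filter.Tendsto (fun n : ℕ => f (n : ℤ) * ζ ^ (-(n : ℤ))) Filter.atTop (nhds 1))
    (P : ℤ → ℂ) (hP : IsJacobiSol a b z P) (hPm : P (-1) = 0) (hP0 : P 0 = 1) :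
    Filter.Tendsto (fun n : ℕ => ζ ^ (n : ℕ) * P (n : ℤ)) Filter.atTop
      (nhds (ζ * f (-1) / (1 - ζ ^ 2))) := by
  have hζne : ζ ≠ 0 := by simpa using hζ0.ne'
  have hw : ‖ζ ^ 2‖ < 1 := by
    rw [norm_pow]
    nlinarith [hζ0.le]
  have hw1 : (1 : ℂ) - ζ ^ 2 ≠ 0 := by
    intro h
    have h2 : ζ ^ 2 = 1 := by linear_combination -h
    rw [h2] at hw
    simp at hw
  -- a n → 1/2
  have hab0 : Tendsto (fun n => |a n - 1/2| + |b n|) atTop (nhds 0) := htr.tendsto_atTop_zero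
  have haR : Tendsto a atTop (nhds (1/2)) := by
    rw [tendsto_iff_dist_tendsto_zero]
    refine squeeze_zero (fun n => dist_nonneg) (fun n => ?_) hab0
    rw [Real.dist_eq]
    exact le_add_of_nonneg_right (abs_nonneg _)
  have haC : Tendsto (fun n => ((a n : ℝ) : ℂ)) atTop (nhds (((1:ℝ)/2 : ℝ) : ℂ)) :=
    (Complex.continuous_ofReal.tendsto _).comp haR
  -- eventual nonvanishing of f
  have hfne : ∀ᶠ n : ℕ in atTop, f (n : ℤ) ≠ 0 := by
    filter_upwards [hasym.eventually_ne one_ne_zero] with n hn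
    intro h
    exact hn (by rw [h, zero_mul])
  obtain ⟨N, hN⟩ := eventually_atTop.mp hfne
  -- Wronskian
  set β : ℂ := f (-1) / 2 with hβ
  set W : ℤ → ℂ := fun n => ((aext a n : ℝ) : ℂ) * (f n * P (n + 1) - f (n + 1) * P n) with hW
  have haextnat : ∀ n : ℕ, ((aext a (n : ℤ) : ℝ) : ℂ) = ((a n : ℝ) : ℂ) := by
    intro n
    simp [aext]
  have step : ∀ n : ℕ, W (n : ℤ) = W ((n : ℤ) - 1) := by
    intro n
    have e1 := hf n
    have e2 := hP n
    simp only [hW, sub_add_cancel, haextnat]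
    linear_combination f (n : ℤ) * e2 - P (n : ℤ) * e1
  have wm1 : W (-1) = β := by
    simp only [hW]
    norm_num [hPm, hP0, aext, hβ]
    ring
  have wconst : ∀ n : ℕ, W (n : ℤ) = β := by
    intro n
    induction n with
    | zero =>
      have h0 := step 0
      norm_num at h0
      simpa using h0.trans wm1
    | succ n ih =>
      have h := step (n + 1)
      rw [show (((n+1:ℕ)):ℤ) - 1 = (n : ℤ) by push_cast; ring] at h
      exact h.trans ih
  have key : ∀ n : ℕ, ((a n : ℝ) : ℂ) * (f (n : ℤ) * P ((n : ℤ) + 1) - f ((n : ℤ) + 1) * P (n : ℤ)) = β := by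
    intro n
    have := wconst n
    simp only [hW, haextnat] at this
    exact this
  -- the summation formula
  set t : ℕ → ℂ := fun k => (((a k : ℝ) : ℂ) * f (k : ℤ) * f ((k : ℤ) + 1))⁻¹ with ht
  set c : ℂ := P (N : ℤ) / f (N : ℤ) with hc
  have hsum : ∀ m : ℕ, P ((N + m : ℕ) : ℤ)
      = f ((N + m : ℕ) : ℤ) * (c + β * ∑ j ∈ range m, t (N + j)) := by
    intro m
    induction m with
    | zero =>
      simp only [Nat.add_zero, Finset.range_zero, Finset.sum_empty, mul_zero, add_zero, hc]
      rw [mul_div_cancel₀ _ (hN N le_rfl)]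
    | succ m ih =>
      have hk := key (N + m)
      have hfn : f ((N + m : ℕ) : ℤ) ≠ 0 := hN _ (Nat.le_add_right N m)
      have hfn1 : f (((N + m : ℕ) : ℤ) + 1) ≠ 0 := by
        have := hN (N + m + 1) (by omega)
        rwa [show (((N + m + 1 : ℕ)) : ℤ) = ((N + m : ℕ) : ℤ) + 1 by push_cast; ring] at this
      have han : ((a (N + m) : ℝ) : ℂ) ≠ 0 := Complex.ofReal_ne_zero.mpr (ha (N + m)).ne'
      have hfN : f (N : ℤ) ≠ 0 := hN N le_rfl
      push_cast at hk ih hfn hfn1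
      rw [show (((N + (m + 1) : ℕ)) : ℤ) = (N : ℤ) + (m : ℤ) + 1 by push_cast; ring,
        Finset.sum_range_succ]
      set S := ∑ j ∈ range m, t (N + j) with hS
      have h1 : c + β * S = P ((N : ℤ) + (m : ℤ)) / f ((N : ℤ) + (m : ℤ)) := by
        rw [ih]
        field_simp
      rw [show c + β * (S + t (N + m)) = (c + β * S) + β * t (N + m) by ring, h1]
      simp only [ht]
      rw [show (((N + m : ℕ)) : ℤ) = (N : ℤ) + (m : ℤ) by push_cast; ring]
      field_simp
      linear_combination hk
  -- the sequence u and its limit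
  set u : ℕ → ℂ := fun k => ζ ^ (2 * k + 1) * t k with hu
  have hu_eq : ∀ k : ℕ, u k = (((a k : ℝ) : ℂ) * (f (k : ℤ) * ζ ^ (-(k : ℤ)))
      * (f (((k + 1 : ℕ)) : ℤ) * ζ ^ (-((k + 1 : ℕ) : ℤ))))⁻¹ := by
    intro k
    simp only [hu, ht]
    rw [show (((k + 1 : ℕ)) : ℤ) = (k : ℤ) + 1 by push_cast; ring]
    rw [show (-((k : ℤ) + 1)) = -(((k + 1 : ℕ) : ℤ)) by push_cast; ring]
    simp only [mul_inv, zpow_neg, inv_inv, zpow_natCast]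
    rw [show (2 * k + 1) = k + (k + 1) by omega, pow_add]
    ring
  have hu_lim : Tendsto u atTop (nhds 2) := by
    have h1 : Tendsto (fun k : ℕ => f (((k + 1 : ℕ)) : ℤ) * ζ ^ (-((k + 1 : ℕ) : ℤ))) atTop
        (nhds 1) := hasym.comp (tendsto_add_atTop_nat 1)
    have h2 := ((haC.mul hasym).mul h1).inv₀
      (show ((((1:ℝ)/2 : ℝ) : ℂ) * 1 * 1) ≠ 0 by norm_num)
    refine Tendsto.congr (fun k => (hu_eq k).symm) ?_
    convert h2 using 2
    norm_num
  have hv : Tendsto (fun j => u (N + j)) atTop (nhds 2) := by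
    have h1 := hu_lim.comp (tendsto_add_atTop_nat N)
    exact Tendsto.congr (fun j => congrArg u (Nat.add_comm j N)) h1
  have hB := conv_lemma (ζ ^ 2) hw (fun j => u (N + j)) 2 hv
  -- limit of A m = ζ^(2(m+N)) * ∑ t
  have hA : Tendsto (fun m => ζ ^ (2 * (m + N)) * ∑ j ∈ range m, t (N + j)) atTop
      (nhds (ζ⁻¹ * (ζ ^ 2 * (1 - ζ ^ 2)⁻¹ * 2))) := by
    refine Tendsto.congr (fun m => ?_) (hB.const_mul ζ⁻¹)
    rw [Finset.mul_sum, Finset.mul_sum]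
    refine Finset.sum_congr rfl fun j hj => ?_
    simp only [Finset.mem_range] at hj
    simp only [hu]
    have h2 : (ζ ^ 2) ^ (m - j) * ζ ^ (2 * (N + j) + 1) = ζ * ζ ^ (2 * (m + N)) := by
      rw [← pow_mul, ← pow_add, ← pow_succ']
      congr 1
      omega
    calc ζ⁻¹ * ((ζ ^ 2) ^ (m - j) * (ζ ^ (2 * (N + j) + 1) * t (N + j)))
        = ζ⁻¹ * ζ * (ζ ^ (2 * (m + N)) * t (N + j)) := by
          rw [← mul_assoc ((ζ ^ 2) ^ (m - j)), h2]; ring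
      _ = ζ ^ (2 * (m + N)) * t (N + j) := by
          rw [inv_mul_cancel₀ hζne, one_mul]
  have hgeo : Tendsto (fun m : ℕ => ζ ^ (2 * (m + N))) atTop (nhds 0) := by
    have h1 : Tendsto (fun k : ℕ => (ζ ^ 2) ^ k) atTop (nhds 0) :=
      tendsto_pow_atTop_nhds_zero_of_norm_lt_one hw
    have h2 := h1.comp (tendsto_add_atTop_nat N)
    exact Tendsto.congr (fun m => by simp [Function.comp, pow_mul]) h2
  have hG : Tendsto (fun m => ζ ^ (2 * (m + N)) * (c + β * ∑ j ∈ range m, t (N + j))) atTop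
      (nhds (ζ * f (-1) / (1 - ζ ^ 2))) := by
    have h2 := (hgeo.mul_const c).add (hA.const_mul β)
    have hval : (0 : ℂ) * c + β * (ζ⁻¹ * (ζ ^ 2 * (1 - ζ ^ 2)⁻¹ * 2)) = ζ * f (-1) / (1 - ζ ^ 2) := by
      rw [hβ]
      field_simp
      ring
    rw [hval] at h2
    exact Tendsto.congr (fun m => by ring) h2
  have hzz : ∀ j : ℕ, ζ ^ (-(j : ℤ)) * ζ ^ (2 * j) = ζ ^ j := by
    intro j
    rw [two_mul, pow_add, ← mul_assoc, zpow_neg, zpow_natCast,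
      inv_mul_cancel₀ (pow_ne_zero _ hζne), one_mul]
  have hff : Tendsto (fun m : ℕ => f ((m + N : ℕ) : ℤ) * ζ ^ (-((m + N : ℕ) : ℤ))) atTop
      (nhds 1) := hasym.comp (tendsto_add_atTop_nat N)
  have hmain : Tendsto (fun m : ℕ => ζ ^ (m + N) * P ((m + N : ℕ) : ℤ)) atTop
      (nhds (ζ * f (-1) / (1 - ζ ^ 2))) := by
    have hprod := hff.mul hG
    rw [one_mul] at hprod
    refine Tendsto.congr (fun m => ?_) hprod
    have hs := hsum m
    rw [Nat.add_comm N m] at hs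
    rw [hs]
    have hz2 := hzz (m + N)
    linear_combination (f ((m + N : ℕ) : ℤ)
      * (c + β * ∑ j ∈ range m, t (N + j))) * hz2
  exact (tendsto_add_atTop_iff_nat N).mp hmain
end
end

section
/- Assume the trace class condition ∑_{n≥0}(|a_n - 1/2| + |b_n|) < ∞. Let ζ ∈ ℂ with 0 < |ζ| < 1, set z = (ζ + ζ⁻¹)/2, and let f = (f_n)_{n≥-1} be a solution of the Jacobi equation at z with f_n ζ^{-n} → 1. If f_{-1} = 0 (i.e. the Jost function Ω(z) = ζ f_{-1} vanishes), then the limit lim_{n→∞} ζ^{-n} P_n(z) exists and is nonzero. -/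
open Filter Finset MeasureTheory

noncomputable section

lemma jacobi_key (a b : ℕ → ℝ) (ha : ∀ n, 0 < a n) (z : ℂ) (u P : ℤ → ℂ)
    (hu : IsJacobiSol a b z u) (hP : IsJacobiSol a b z P)
    (hum : u (-1) = 0) (hPm : P (-1) = 0) (hP0 : P 0 = 1) :
    ∀ n : ℕ, u (n : ℤ) = u 0 * P (n : ℤ) := by
  have hA : ∀ n : ℕ, ((a n : ℂ)) ≠ 0 := fun n => by
    exact_mod_cast (ha n).ne'
  have main : ∀ n : ℕ, u (n : ℤ) = u 0 * P (n : ℤ) ∧ u ((n : ℤ) + 1) = u 0 * P ((n : ℤ) + 1) := by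
    intro n
    induction n with
    | zero =>
      constructor
      · simp [hP0]
      · have h1 := hu 0
        have h2 := hP 0
        norm_num [hum, hPm, hP0] at h1 h2
        have e : ((0:ℕ):ℤ) + 1 = 1 := by norm_num
        rw [e]
        exact mul_left_cancel₀ (hA 0) (by linear_combination h1 - u 0 * h2)
    | succ n ih =>
      refine ⟨ih.2, ?_⟩
      have h1 := hu (n + 1)
      have h2 := hP (n + 1)
      have e1 : ((n + 1 : ℕ) : ℤ) - 1 = (n : ℤ) := by push_cast; ring
      have e2 : (aext a ((n : ℤ)) : ℝ) = a n := by simp [aext]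
      rw [e1, e2] at h1 h2
      have ih1 := ih.1
      have ih2 := ih.2
      have e3 : ((n + 1 : ℕ) : ℤ) = (n : ℤ) + 1 := by push_cast; ring
      rw [e3] at h1 h2 ⊢
      have : (a (n + 1) : ℂ) * u ((n : ℤ) + 1 + 1) = (a (n + 1) : ℂ) * (u 0 * P ((n : ℤ) + 1 + 1)) := by
        have hu' : (a (n+1) : ℂ) * u ((n:ℤ)+1+1) = z * u ((n:ℤ)+1) - (a n : ℂ) * u (n:ℤ) - (b (n+1) : ℂ) * u ((n:ℤ)+1) := by
          linear_combination h1
        have hP' : (a (n+1) : ℂ) * P ((n:ℤ)+1+1) = z * P ((n:ℤ)+1) - (a n : ℂ) * P (n:ℤ) - (b (n+1) : ℂ) * P ((n:ℤ)+1) := by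
          linear_combination h2
        linear_combination h1 - u 0 * h2 - (a n : ℂ) * ih1 - ((b (n+1) : ℂ) - z) * ih2
      exact mul_left_cancel₀ (hA (n+1)) this
  exact fun n => (main n).1

/-- if the Jost function vanishes at `z` (i.e. `f_{-1} = 0`), then
`ζ^{-n} P_n(z)` converges to a nonzero limit. -/
theorem szego_asymptotics_eigenvalue
    (a b : ℕ → ℝ) (ha : ∀ n, 0 < a n)
    (htr : Summable (fun n : ℕ => |a n - 1/2| + |b n|))
    (ζ : ℂ) (hζ0 : 0 < ‖ζ‖) (hζ1 : ‖ζ‖ < 1)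
    (z : ℂ) (hz : z = (ζ + ζ⁻¹) / 2)
    (f : ℤ → ℂ) (hf : IsJacobiSol a b z f)
    (hasym : Filter.Tendsto (fun n : ℕ => f (n : ℤ) * ζ ^ (-(n : ℤ))) Filter.atTop (nhds 1))
    (hres : f (-1) = 0)
    (P : ℤ → ℂ) (hP : IsJacobiSol a b z P) (hPm : P (-1) = 0) (hP0 : P 0 = 1) :
    ∃ L : ℂ, L ≠ 0 ∧
      Filter.Tendsto (fun n : ℕ => ζ ^ (-(n : ℤ)) * P (n : ℤ)) Filter.atTop (nhds L) := by
  have key := jacobi_key a b ha z f P hf hP hres hPm hP0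
  have hf0 : f 0 ≠ 0 := by
    intro h0
    have hz0 : Filter.Tendsto (fun n : ℕ => f (n:ℤ) * ζ ^ (-(n:ℤ))) Filter.atTop (nhds 0) := by
      have he : (fun n : ℕ => f (n:ℤ) * ζ ^ (-(n:ℤ))) = fun _ => (0:ℂ) :=
        funext fun n => by rw [key n, h0]; ring
      rw [he]
      exact tendsto_const_nhds
    exact zero_ne_one (tendsto_nhds_unique hz0 hasym)
  refine ⟨(f 0)⁻¹, inv_ne_zero hf0, ?_⟩
  have he : (fun n : ℕ => ζ ^ (-(n:ℤ)) * P (n:ℤ)) = fun n : ℕ => (f 0)⁻¹ * (f (n:ℤ) * ζ ^ (-(n:ℤ))) := by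
    funext n
    rw [key n]
    field_simp
  rw [he]
  simpa using hasym.const_mul ((f 0)⁻¹)
end
end
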